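/- arXiv:1901.01090 — 3 statements merged into one kernel-verified Lean document; each statement's English description precedes it below -/
import Mathlib

section
/- Let G be a finite simple graph with at least one vertex. Then sup_{n ≥ 1} (ω(G^{*n}))^{1/n} = inf { η(G) : η is a semiring-homomorphic graph invariant }, where ω denotes the clique number and G^{*n} the n-fold disjunctive product of G with itself. (The left-hand side is the complementary Shannon capacity Θ(Ḡ).) -/
open SimpleGraph

universe u v

/-- The join `G + H` of two simple graphs. -/
def graphJoin {α : Type u} {β : Type v} (G : SimpleGraph α) (H : SimpleGraph β) :
    SimpleGraph (α ⊕ β) where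
  Adj x y :=
    match x, y with
    | Sum.inl a, Sum.inl a' => G.Adj a a'
    | Sum.inr b, Sum.inr b' => H.Adj b b'
    | Sum.inl _, Sum.inr _ => True
    | Sum.inr _, Sum.inl _ => True
  symm := by
    refine ⟨?_⟩
    rintro (a | b) (a' | b') h
    · exact G.adj_symm h
    · trivial
    · trivial
    · exact H.adj_symm h
  loopless := by
    refine ⟨?_⟩
    rintro (a | b) h
    · exact G.loopless.irrefl a h
    · exact H.loopless.irrefl b h

/-- The disjunctive product `G * H`. -/
def disjProd {α : Type u} {β : Type v} (G : SimpleGraph α) (H : SimpleGraph β) :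
    SimpleGraph (α × β) where
  Adj p q := G.Adj p.1 q.1 ∨ H.Adj p.2 q.2
  symm := ⟨fun p q h => h.imp (fun h' => G.adj_symm h') (fun h' => H.adj_symm h')⟩
  loopless := ⟨fun p h => h.elim (fun h' => G.loopless.irrefl p.1 h') (fun h' => H.loopless.irrefl p.2 h')⟩

/-- The lexicographic product `G ⋉ H`. -/
def lexProd {α : Type u} {β : Type v} (G : SimpleGraph α) (H : SimpleGraph β) :
    SimpleGraph (α × β) where
  Adj p q := G.Adj p.1 q.1 ∨ (p.1 = q.1 ∧ H.Adj p.2 q.2)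
  symm := ⟨fun p q h => h.imp (fun h' => G.adj_symm h') (fun h' => ⟨h'.1.symm, H.adj_symm h'.2⟩)⟩
  loopless := ⟨fun p h => h.elim (fun h' => G.loopless.irrefl p.1 h') (fun h' => H.loopless.irrefl p.2 h'.2)⟩

/-- The `d`-fold blowup `G ⋉ d`, i.e. the lexicographic product `G ⋉ K_d`. -/
def blowup {α : Type u} (G : SimpleGraph α) (d : ℕ) : SimpleGraph (α × Fin d) :=
  lexProd G (⊤ : SimpleGraph (Fin d))

/-- The `d`-fractionalization `G/d`: the graph of `d`-cliques of `G`, with two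
`d`-cliques adjacent iff they are disjoint and pairwise adjacent. -/
def fracGraph {α : Type u} (G : SimpleGraph α) (d : ℕ) :
    SimpleGraph {S : Finset α // S.card = d ∧ G.IsClique (S : Set α)} where
  Adj S T := S ≠ T ∧ Disjoint S.val T.val ∧ ∀ a ∈ S.val, ∀ b ∈ T.val, G.Adj a b
  symm := by
    refine ⟨?_⟩
    rintro S T ⟨hne, hd, hadj⟩
    exact ⟨hne.symm, hd.symm, fun b hb a ha => (hadj a ha b hb).symm⟩
  loopless := ⟨fun S h => h.1 rfl⟩

/-- The `n`-fold disjunctive power `G^{*n}`. -/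
def disjPow {α : Type u} (G : SimpleGraph α) (n : ℕ) :
    SimpleGraph (Fin n → α) where
  Adj f g := ∃ i, G.Adj (f i) (g i)
  symm := ⟨fun f g ⟨i, h⟩ => ⟨i, h.symm⟩⟩
  loopless := ⟨fun f ⟨i, h⟩ => G.loopless.irrefl _ h⟩

/-- A semiring family of graphs. -/
structure SemiringFamily where
  V : ℕ → Type u
  F : ∀ n, SimpleGraph (V n)
  isEmpty_zero : IsEmpty (V 0)
  nonempty_one : Nonempty (V 1)
  add_hom : ∀ n m : ℕ, Nonempty (graphJoin (F n) (F m) →g F (n + m))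
  mul_hom : ∀ n m : ℕ, Nonempty (disjProd (F n) (F m) →g F (n * m))

/-- The `F`-number: the least `n` such that `G → F_n`. -/
noncomputable def etaF (F : SemiringFamily.{u}) {α : Type v} (G : SimpleGraph α) : ℕ :=
  sInf {n : ℕ | Nonempty (G →g F.F n)}

/-- The fractional `F`-number. -/
noncomputable def etaFrac (F : SemiringFamily.{u}) {α : Type v} (G : SimpleGraph α) : ℝ :=
  sInf {x : ℝ | ∃ n d : ℕ, 1 ≤ d ∧ Nonempty (G →g fracGraph (F.F n) d) ∧ x = (n : ℝ) / d}

/-- The asymptotic `F`-number. -/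
noncomputable def etaAsymp (F : SemiringFamily.{u}) {α : Type v} (G : SimpleGraph α) : ℝ :=
  sInf {x : ℝ | ∃ n : ℕ, 1 ≤ n ∧ x = (etaF F (disjPow G n) : ℝ) ^ ((1 : ℝ) / n)}

/-- The orthogonal complement of a set of vertices. -/
def perp {α : Type u} (G : SimpleGraph α) (S : Set α) : Set α :=
  {v | ∀ s ∈ S, G.Adj v s}

/-- A flat is a set of vertices with `S^{⊥⊥} = S`. -/
def IsFlat {α : Type u} (G : SimpleGraph α) (S : Set α) : Prop :=
  perp G (perp G S) = S

/-- Homomorphic equivalence of two graphs. -/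
def HomEquiv {α : Type u} {β : Type v} (G : SimpleGraph α) (H : SimpleGraph β) : Prop :=
  Nonempty (G →g H) ∧ Nonempty (H →g G)

/-- A linear-like semiring family: every flat of `F_n` induces a subgraph with some
clique number `k`, homomorphically equivalent to `F_k`. -/
structure LinearLikeFamily extends SemiringFamily where
  linearLike : ∀ n (S : Set (V n)), IsFlat (F n) S →
    ∃ k : ℕ, (∃ s : Finset S, ((F n).induce S).IsNClique k s) ∧
      (∀ s : Finset S, ¬ ((F n).induce S).IsNClique (k + 1) s) ∧
      HomEquiv ((F n).induce S) (F k)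

/-- A semiring-homomorphic graph invariant: a real-valued invariant of finite simple
graphs, normalized on `K_1`, monotone under graph homomorphisms, additive under
joins, and multiplicative under disjunctive products. -/
structure SRInvariant where
  eta : ∀ {V : Type} [Fintype V], SimpleGraph V → ℝ
  eta_one : eta (⊤ : SimpleGraph (Fin 1)) = 1
  eta_mono : ∀ {V W : Type} [Fintype V] [Fintype W] (G : SimpleGraph V) (H : SimpleGraph W),
    Nonempty (G →g H) → eta G ≤ eta H
  eta_add : ∀ {V W : Type} [Fintype V] [Fintype W] (G : SimpleGraph V) (H : SimpleGraph W),
    eta (graphJoin G H) = eta G + eta H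
  eta_mul : ∀ {V W : Type} [Fintype V] [Fintype W] (G : SimpleGraph V) (H : SimpleGraph W),
    eta (disjProd G H) = eta G * eta H

namespace ZD
open SimpleGraph

variable {α : Type u} {β : Type v} {γ : Type w}

@[simp] lemma graphJoin_adj_inl_inl {G : SimpleGraph α} {H : SimpleGraph β} {a a' : α} :
    (graphJoin G H).Adj (Sum.inl a) (Sum.inl a') ↔ G.Adj a a' := Iff.rfl
@[simp] lemma graphJoin_adj_inr_inr {G : SimpleGraph α} {H : SimpleGraph β} {b b' : β} :
    (graphJoin G H).Adj (Sum.inr b) (Sum.inr b') ↔ H.Adj b b' := Iff.rfl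
@[simp] lemma graphJoin_adj_inl_inr {G : SimpleGraph α} {H : SimpleGraph β} {a : α} {b : β} :
    (graphJoin G H).Adj (Sum.inl a) (Sum.inr b) := trivial
@[simp] lemma graphJoin_adj_inr_inl {G : SimpleGraph α} {H : SimpleGraph β} {a : α} {b : β} :
    (graphJoin G H).Adj (Sum.inr b) (Sum.inl a) := trivial
@[simp] lemma disjProd_adj {G : SimpleGraph α} {H : SimpleGraph β} {p q : α × β} :
    (disjProd G H).Adj p q ↔ G.Adj p.1 q.1 ∨ H.Adj p.2 q.2 := Iff.rfl
@[simp] lemma disjPow_adj {G : SimpleGraph α} {n : ℕ} {f g : Fin n → α} :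
    (disjPow G n).Adj f g ↔ ∃ i, G.Adj (f i) (g i) := Iff.rfl

lemma he_refl (G : SimpleGraph α) : HomEquiv G G := ⟨⟨Hom.id⟩, ⟨Hom.id⟩⟩

lemma he_symm {G : SimpleGraph α} {H : SimpleGraph β} (h : HomEquiv G H) : HomEquiv H G :=
  ⟨h.2, h.1⟩

lemma he_trans {G : SimpleGraph α} {H : SimpleGraph β} {K : SimpleGraph γ}
    (h : HomEquiv G H) (h' : HomEquiv H K) : HomEquiv G K :=
  ⟨h'.1.elim fun f => h.1.elim fun g => ⟨f.comp g⟩,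
   h.2.elim fun f => h'.2.elim fun g => ⟨f.comp g⟩⟩

/-- Functoriality of join. -/
def joinHom {G : SimpleGraph α} {H : SimpleGraph β} {G' : SimpleGraph γ} {H' : SimpleGraph δ}
    (f : G →g G') (g : H →g H') : graphJoin G H →g graphJoin G' H' where
  toFun := Sum.map f g
  map_rel' := by
    rintro (a | b) (a' | b') h
    · exact f.map_rel h
    · trivial
    · trivial
    · exact g.map_rel h

/-- Functoriality of disjunctive product. -/
def prodHom {G : SimpleGraph α} {H : SimpleGraph β} {G' : SimpleGraph γ} {H' : SimpleGraph δ}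
    (f : G →g G') (g : H →g H') : disjProd G H →g disjProd G' H' where
  toFun := Prod.map f g
  map_rel' := by
    rintro p q (h | h)
    · exact Or.inl (f.map_rel h)
    · exact Or.inr (g.map_rel h)

lemma he_join_congr {G : SimpleGraph α} {H : SimpleGraph β} {G' : SimpleGraph γ}
    {H' : SimpleGraph δ} (h : HomEquiv G G') (h' : HomEquiv H H') :
    HomEquiv (graphJoin G H) (graphJoin G' H') :=
  ⟨h.1.elim fun f => h'.1.elim fun g => ⟨joinHom f g⟩,
   h.2.elim fun f => h'.2.elim fun g => ⟨joinHom f g⟩⟩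

lemma he_prod_congr {G : SimpleGraph α} {H : SimpleGraph β} {G' : SimpleGraph γ}
    {H' : SimpleGraph δ} (h : HomEquiv G G') (h' : HomEquiv H H') :
    HomEquiv (disjProd G H) (disjProd G' H') :=
  ⟨h.1.elim fun f => h'.1.elim fun g => ⟨prodHom f g⟩,
   h.2.elim fun f => h'.2.elim fun g => ⟨prodHom f g⟩⟩

lemma he_comap (e : β ≃ α) (J : SimpleGraph α) : HomEquiv (J.comap e) J := by
  constructor
  · exact ⟨⟨e, fun h => h⟩⟩
  · exact ⟨⟨e.symm, by intro a b h; show J.Adj (e (e.symm a)) (e (e.symm b)); simpa using h⟩⟩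

lemma he_join_comm (G : SimpleGraph α) (H : SimpleGraph β) :
    HomEquiv (graphJoin G H) (graphJoin H G) := by
  constructor <;>
    exact ⟨⟨Sum.swap, by rintro (a | b) (a' | b') h <;> simp_all⟩⟩

lemma he_join_assoc (G : SimpleGraph α) (H : SimpleGraph β) (K : SimpleGraph γ) :
    HomEquiv (graphJoin (graphJoin G H) K) (graphJoin G (graphJoin H K)) := by
  constructor
  · exact ⟨⟨Equiv.sumAssoc α β γ, by rintro ((a | b) | c) ((a' | b') | c') h <;>
      simp_all [Equiv.sumAssoc]⟩⟩
  · exact ⟨⟨(Equiv.sumAssoc α β γ).symm, by rintro (a | (b | c)) (a' | (b' | c')) h <;>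
      simp_all [Equiv.sumAssoc]⟩⟩

lemma he_join_bot (G : SimpleGraph α) :
    HomEquiv (graphJoin G (⊥ : SimpleGraph (Fin 0))) G := by
  constructor
  · exact ⟨⟨Sum.elim id Fin.elim0, by rintro (a | b) (a' | b') h <;> first | exact h | exact b.elim0 | exact b'.elim0⟩⟩
  · exact ⟨⟨Sum.inl, fun h => h⟩⟩

lemma he_prod_one (G : SimpleGraph α) :
    HomEquiv (disjProd G (⊤ : SimpleGraph (Fin 1))) G := by
  constructor
  · refine ⟨⟨Prod.fst, ?_⟩⟩
    rintro p q (h | h)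
    · exact h
    · exact absurd (Subsingleton.elim p.2 q.2) h.ne
  · exact ⟨⟨fun a => (a, 0), fun h => Or.inl h⟩⟩

lemma he_prod_bot (G : SimpleGraph α) :
    HomEquiv (disjProd G (⊥ : SimpleGraph (Fin 0))) (⊥ : SimpleGraph (Fin 0)) := by
  constructor
  · exact ⟨⟨fun p => p.2.elim0, fun {p q} h => p.2.elim0⟩⟩
  · exact ⟨⟨fun v => v.elim0, fun {v} h => v.elim0⟩⟩

lemma he_prod_comm (G : SimpleGraph α) (H : SimpleGraph β) :
    HomEquiv (disjProd G H) (disjProd H G) := by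
  constructor <;> exact ⟨⟨Prod.swap, by rintro p q (h | h) <;> simp_all⟩⟩

lemma he_prod_assoc (G : SimpleGraph α) (H : SimpleGraph β) (K : SimpleGraph γ) :
    HomEquiv (disjProd (disjProd G H) K) (disjProd G (disjProd H K)) := by
  constructor
  · exact ⟨⟨Equiv.prodAssoc α β γ, by rintro p q ((h | h) | h) <;> simp_all [Equiv.prodAssoc]⟩⟩
  · exact ⟨⟨(Equiv.prodAssoc α β γ).symm, by rintro p q (h | (h | h)) <;>
      simp_all [Equiv.prodAssoc]⟩⟩

lemma he_distrib (A : SimpleGraph α) (B : SimpleGraph β) (C : SimpleGraph γ) :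
    HomEquiv (disjProd (graphJoin A B) C)
      (graphJoin (disjProd A C) (disjProd B C)) := by
  constructor
  · refine ⟨⟨fun p => Sum.elim (fun a => Sum.inl (a, p.2)) (fun b => Sum.inr (b, p.2)) p.1, ?_⟩⟩
    rintro ⟨(a | b), c⟩ ⟨(a' | b'), c'⟩ (h | h) <;> simp_all
  · refine ⟨⟨Sum.elim (fun p => (Sum.inl p.1, p.2)) (fun p => (Sum.inr p.1, p.2)), ?_⟩⟩
    rintro (⟨a, c⟩ | ⟨b, c⟩) (⟨a', c'⟩ | ⟨b', c'⟩) h <;>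
      simp_all <;> tauto

lemma top_join_top_adj {a b : ℕ} {x y : Fin a ⊕ Fin b} :
    (graphJoin (⊤ : SimpleGraph (Fin a)) (⊤ : SimpleGraph (Fin b))).Adj x y ↔ x ≠ y := by
  rcases x with u | u <;> rcases y with v | v <;> simp [SimpleGraph.top_adj]

lemma top_prod_adj {a b : ℕ} {p q : Fin a × Fin b} :
    (disjProd (⊤ : SimpleGraph (Fin a)) (⊤ : SimpleGraph (Fin b))).Adj p q ↔ p ≠ q := by
  rw [disjProd_adj]
  simp only [SimpleGraph.top_adj, Ne, Prod.ext_iff]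
  tauto

lemma he_top_join_top (a b : ℕ) :
    HomEquiv (graphJoin (⊤ : SimpleGraph (Fin a)) (⊤ : SimpleGraph (Fin b)))
      (⊤ : SimpleGraph (Fin (a + b))) := by
  constructor
  · exact ⟨⟨finSumFinEquiv, fun h =>
      finSumFinEquiv.injective.ne (top_join_top_adj.mp h)⟩⟩
  · exact ⟨⟨finSumFinEquiv.symm, fun h =>
      top_join_top_adj.mpr (finSumFinEquiv.symm.injective.ne h.ne)⟩⟩

lemma he_top_prod_top (a b : ℕ) :
    HomEquiv (disjProd (⊤ : SimpleGraph (Fin a)) (⊤ : SimpleGraph (Fin b)))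
      (⊤ : SimpleGraph (Fin (a * b))) := by
  constructor
  · exact ⟨⟨finProdFinEquiv, fun h =>
      finProdFinEquiv.injective.ne (top_prod_adj.mp h)⟩⟩
  · exact ⟨⟨finProdFinEquiv.symm, fun h =>
      top_prod_adj.mpr (finProdFinEquiv.symm.injective.ne h.ne)⟩⟩

/-- Functoriality of disjunctive powers. -/
def powHom {G : SimpleGraph α} {H : SimpleGraph β} (f : G →g H) (n : ℕ) :
    disjPow G n →g disjPow H n where
  toFun v := f ∘ v
  map_rel' := by rintro v w ⟨i, h⟩; exact ⟨i, f.map_rel h⟩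

lemma he_pow_zero (G : SimpleGraph α) :
    HomEquiv (disjPow G 0) (⊤ : SimpleGraph (Fin 1)) := by
  constructor
  · exact ⟨⟨fun _ => 0, by rintro v w ⟨i, _⟩; exact i.elim0⟩⟩
  · exact ⟨⟨fun _ => Fin.elim0, by intro x y h; exact absurd (Subsingleton.elim x y) h.ne⟩⟩

lemma he_pow_succ (G : SimpleGraph α) (n : ℕ) :
    HomEquiv (disjPow G (n + 1)) (disjProd (disjPow G n) G) := by
  constructor
  · refine ⟨⟨fun f => (fun i => f i.castSucc, f (Fin.last n)), ?_⟩⟩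
    rintro f g ⟨i, h⟩
    revert h
    refine Fin.lastCases ?_ ?_ i
    · exact fun h => Or.inr h
    · exact fun j h => Or.inl ⟨j, h⟩
  · refine ⟨⟨fun p => Fin.snoc p.1 p.2, ?_⟩⟩
    rintro p q (⟨j, h⟩ | h)
    · exact ⟨j.castSucc, by simpa using h⟩
    · exact ⟨Fin.last n, by simpa using h⟩

section Clique
open Finset

variable {α : Type u} {β : Type v} [Fintype α] [Fintype β]

lemma cliqueNum_le_of_hom {G : SimpleGraph α} {H : SimpleGraph β} (f : G →g H) :
    G.cliqueNum ≤ H.cliqueNum := by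
  classical
  obtain ⟨s, hs⟩ := G.exists_isNClique_cliqueNum
  have hinj : Set.InjOn f s := by
    intro x hx y hy hxy
    by_contra hne
    have hadj := f.map_rel (hs.1 hx hy hne)
    rw [hxy] at hadj
    exact H.loopless.irrefl _ hadj
  have hcl : H.IsClique (s.image f : Set β) := by
    intro a ha b hb hab
    simp only [coe_image, Set.mem_image] at ha hb
    obtain ⟨x, hx, rfl⟩ := ha
    obtain ⟨y, hy, rfl⟩ := hb
    exact f.map_rel (hs.1 hx hy (fun hc => hab (by rw [hc])))
  have hcard : (s.image f).card = G.cliqueNum := by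
    rw [Finset.card_image_of_injOn hinj, hs.2]
  calc G.cliqueNum = (s.image f).card := hcard.symm
    _ ≤ H.cliqueNum := hcl.card_le_cliqueNum

lemma cliqueNum_le_of_homEquiv {G : SimpleGraph α} {H : SimpleGraph β}
    (h : Nonempty (G →g H)) : G.cliqueNum ≤ H.cliqueNum :=
  h.elim fun f => cliqueNum_le_of_hom f

lemma cliqueNum_top (t : ℕ) : (⊤ : SimpleGraph (Fin t)).cliqueNum = t := by
  apply le_antisymm
  · obtain ⟨s, hs⟩ := (⊤ : SimpleGraph (Fin t)).exists_isNClique_cliqueNum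
    rw [← hs.2]
    simpa using s.card_le_univ
  · have : (⊤ : SimpleGraph (Fin t)).IsClique (univ : Finset (Fin t)) := by
      intro a _ b _ hab
      exact hab
    simpa using this.card_le_cliqueNum

lemma cliqueNum_pos {G : SimpleGraph α} [Nonempty α] : 1 ≤ G.cliqueNum := by
  inhabit α
  have : G.IsClique ({default} : Finset α) := by simp
  simpa using this.card_le_cliqueNum

lemma cliqueNum_le_card (G : SimpleGraph α) : G.cliqueNum ≤ Fintype.card α := by
  obtain ⟨s, hs⟩ := G.exists_isNClique_cliqueNum
  rw [← hs.2]
  exact s.card_le_univ.trans (by simp)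

lemma cliqueNum_join (G : SimpleGraph α) (H : SimpleGraph β) :
    (graphJoin G H).cliqueNum = G.cliqueNum + H.cliqueNum := by
  apply le_antisymm
  · obtain ⟨u, hu⟩ := (graphJoin G H).exists_isNClique_cliqueNum
    have hL : G.IsClique (u.toLeft : Set α) := by
      intro x hx y hy hxy
      have := hu.1 (by simpa using hx) (by simpa using hy)
        (fun hc => hxy (Sum.inl.inj hc))
      exact this
    have hR : H.IsClique (u.toRight : Set β) := by
      intro x hx y hy hxy
      have := hu.1 (by simpa using hx) (by simpa using hy)
        (fun hc => hxy (Sum.inr.inj hc))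
      exact this
    calc (graphJoin G H).cliqueNum = u.card := hu.2.symm
      _ = u.toLeft.card + u.toRight.card := Finset.card_toLeft_add_card_toRight.symm
      _ ≤ G.cliqueNum + H.cliqueNum := add_le_add hL.card_le_cliqueNum hR.card_le_cliqueNum
  · obtain ⟨s, hs⟩ := G.exists_isNClique_cliqueNum
    obtain ⟨t, ht⟩ := H.exists_isNClique_cliqueNum
    have hcl : (graphJoin G H).IsClique ((s.disjSum t : Finset (α ⊕ β)) : Set (α ⊕ β)) := by
      intro x hx y hy hxy
      rw [Finset.mem_coe] at hx hy
      rcases x with a | b <;> rcases y with a' | b'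
      · rw [Finset.inl_mem_disjSum] at hx hy
        exact hs.1 hx hy (fun hc => hxy (by rw [hc]))
      · exact trivial
      · exact trivial
      · rw [Finset.inr_mem_disjSum] at hx hy
        exact ht.1 hx hy (fun hc => hxy (by rw [hc]))
    have := hcl.card_le_cliqueNum
    rwa [Finset.card_disjSum, hs.2, ht.2] at this

lemma cliqueNum_prod_le (G : SimpleGraph α) (H : SimpleGraph β) :
    (disjProd G H).cliqueNum ≤ Fintype.card α * H.cliqueNum := by
  classical
  obtain ⟨u, hu⟩ := (disjProd G H).exists_isNClique_cliqueNum
  rw [← hu.2]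
  have hcard : u.card = ∑ a : α, (u.filter (fun p => p.1 = a)).card :=
    Finset.card_eq_sum_card_fiberwise (fun (p : α × β) _ => Finset.mem_univ p.1)
  rw [hcard]
  have hfib : ∀ a : α, (u.filter (fun p => p.1 = a)).card ≤ H.cliqueNum := by
    intro a
    have hinj : Set.InjOn Prod.snd ((u.filter (fun p => p.1 = a) : Finset (α × β)) : Set (α × β)) := by
      intro p hp q hq hpq
      simp only [coe_filter, Set.mem_setOf_eq] at hp hq
      exact Prod.ext (hp.2.trans hq.2.symm) hpq
    have hcl : H.IsClique (((u.filter (fun p => p.1 = a)).image Prod.snd : Finset β)) := by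
      intro x hx y hy hxy
      simp only [coe_image, Set.mem_image, mem_coe, Finset.mem_filter] at hx hy
      obtain ⟨p, ⟨hp, hpa⟩, rfl⟩ := hx
      obtain ⟨q, ⟨hq, hqa⟩, rfl⟩ := hy
      have hne : p ≠ q := fun hc => hxy (by rw [hc])
      rcases hu.1 hp hq hne with h | h
      · exact absurd (hpa.trans hqa.symm) h.ne
      · exact h
    calc (u.filter (fun p => p.1 = a)).card
        = ((u.filter (fun p => p.1 = a)).image Prod.snd).card :=
          (Finset.card_image_of_injOn hinj).symm
      _ ≤ H.cliqueNum := hcl.card_le_cliqueNum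
  calc ∑ a : α, (u.filter (fun p => p.1 = a)).card ≤ ∑ _a : α, H.cliqueNum :=
        Finset.sum_le_sum (fun a _ => hfib a)
    _ = Fintype.card α * H.cliqueNum := by simp [Finset.sum_const, mul_comm]

lemma le_cliqueNum_prod (G : SimpleGraph α) (H : SimpleGraph β) :
    G.cliqueNum * H.cliqueNum ≤ (disjProd G H).cliqueNum := by
  obtain ⟨s, hs⟩ := G.exists_isNClique_cliqueNum
  obtain ⟨t, ht⟩ := H.exists_isNClique_cliqueNum
  have hcl : (disjProd G H).IsClique ((s ×ˢ t : Finset (α × β)) : Set (α × β)) := by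
    intro p hp q hq hpq
    simp only [coe_product, Set.mem_prod, mem_coe] at hp hq
    by_cases h1 : p.1 = q.1
    · have h2 : p.2 ≠ q.2 := fun hc => hpq (Prod.ext h1 hc)
      exact Or.inr (ht.1 hp.2 hq.2 h2)
    · exact Or.inl (hs.1 hp.1 hq.1 h1)
  have := hcl.card_le_cliqueNum
  rwa [Finset.card_product, hs.2, ht.2] at this

lemma cliqueNum_top_prod (t : ℕ) (H : SimpleGraph β) :
    (disjProd (⊤ : SimpleGraph (Fin t)) H).cliqueNum = t * H.cliqueNum := by
  apply le_antisymm
  · simpa using cliqueNum_prod_le (⊤ : SimpleGraph (Fin t)) H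
  · have := le_cliqueNum_prod (⊤ : SimpleGraph (Fin t)) H
    rwa [cliqueNum_top] at this

end Clique

section Skeleton

lemma he_isEmpty {α : Type u} {β : Type v} [IsEmpty α] [IsEmpty β]
    (G : SimpleGraph α) (H : SimpleGraph β) : HomEquiv G H :=
  ⟨⟨⟨isEmptyElim, fun {a} => isEmptyElim a⟩⟩, ⟨⟨isEmptyElim, fun {a} => isEmptyElim a⟩⟩⟩

/-- The skeleton type of finite simple graphs. -/
def Sk : Type := Σ n : ℕ, SimpleGraph (Fin n)

/-- The graph of a skeleton element. -/
abbrev Sk.gr (x : Sk) : SimpleGraph (Fin x.1) := x.2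

def addS (x y : Sk) : Sk := ⟨x.1 + y.1, (graphJoin x.2 y.2).comap finSumFinEquiv.symm⟩
def mulS (x y : Sk) : Sk := ⟨x.1 * y.1, (disjProd x.2 y.2).comap finProdFinEquiv.symm⟩
def natS (t : ℕ) : Sk := ⟨t, ⊤⟩

instance : IsEmpty (Fin (natS 0).1) := inferInstanceAs (IsEmpty (Fin 0))

lemma he_addS (x y : Sk) : HomEquiv (addS x y).2 (graphJoin x.2 y.2) := he_comap _ _
lemma he_mulS (x y : Sk) : HomEquiv (mulS x y).2 (disjProd x.2 y.2) := he_comap _ _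

instance skSetoid : Setoid Sk :=
  ⟨fun x y => HomEquiv x.2 y.2, ⟨fun x => he_refl _, he_symm, he_trans⟩⟩

lemma eqv_iff {x y : Sk} : x ≈ y ↔ HomEquiv x.2 y.2 := Iff.rfl

/-- The quotient of the skeleton by homomorphic equivalence. -/
def Q : Type := Quotient skSetoid

lemma addS_congr {x x' y y' : Sk} (h : x ≈ x') (h' : y ≈ y') : addS x y ≈ addS x' y' :=
  he_trans (he_addS x y) (he_trans (he_join_congr h h') (he_symm (he_addS x' y')))

lemma mulS_congr {x x' y y' : Sk} (h : x ≈ x') (h' : y ≈ y') : mulS x y ≈ mulS x' y' :=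
  he_trans (he_mulS x y) (he_trans (he_prod_congr h h') (he_symm (he_mulS x' y')))

lemma eqv_add_assoc (x y z : Sk) : addS (addS x y) z ≈ addS x (addS y z) :=
  he_trans (he_addS _ _) <| he_trans (he_join_congr (he_addS x y) (he_refl _)) <|
    he_trans (he_join_assoc x.2 y.2 z.2) <|
      he_trans (he_join_congr (he_refl _) (he_symm (he_addS y z))) (he_symm (he_addS _ _))

lemma eqv_add_comm (x y : Sk) : addS x y ≈ addS y x :=
  he_trans (he_addS x y) <| he_trans (he_join_comm x.2 y.2) (he_symm (he_addS y x))

lemma eqv_add_zero (x : Sk) : addS x (natS 0) ≈ x :=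
  he_trans (he_addS _ _) <|
    he_trans (he_join_congr (he_refl x.2) (he_isEmpty _ (⊥ : SimpleGraph (Fin 0))))
      (he_join_bot x.2)

lemma eqv_mul_comm (x y : Sk) : mulS x y ≈ mulS y x :=
  he_trans (he_mulS x y) <| he_trans (he_prod_comm x.2 y.2) (he_symm (he_mulS y x))

lemma eqv_mul_assoc (x y z : Sk) : mulS (mulS x y) z ≈ mulS x (mulS y z) :=
  he_trans (he_mulS _ _) <| he_trans (he_prod_congr (he_mulS x y) (he_refl _)) <|
    he_trans (he_prod_assoc x.2 y.2 z.2) <|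
      he_trans (he_prod_congr (he_refl _) (he_symm (he_mulS y z))) (he_symm (he_mulS _ _))

lemma eqv_mul_one (x : Sk) : mulS x (natS 1) ≈ x :=
  he_trans (he_mulS _ _) (he_prod_one x.2)

lemma eqv_mul_zero (x : Sk) : mulS x (natS 0) ≈ natS 0 :=
  he_trans (he_mulS _ _) <|
    he_trans (he_prod_congr (he_refl x.2) (he_isEmpty _ (⊥ : SimpleGraph (Fin 0))))
      (he_trans (he_prod_bot x.2) (he_isEmpty _ _))

lemma eqv_left_distrib (x y z : Sk) : mulS x (addS y z) ≈ addS (mulS x y) (mulS x z) :=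
  he_trans (he_mulS _ _) <|
  he_trans (he_prod_congr (he_refl x.2) (he_addS y z)) <|
  he_trans (he_prod_comm x.2 _) <|
  he_trans (he_distrib y.2 z.2 x.2) <|
  he_trans (he_join_congr (he_prod_comm y.2 x.2) (he_prod_comm z.2 x.2)) <|
  he_trans (he_join_congr (he_symm (he_mulS x y)) (he_symm (he_mulS x z)))
    (he_symm (he_addS _ _))

lemma eqv_nat_add (a b : ℕ) : addS (natS a) (natS b) ≈ natS (a + b) :=
  he_trans (he_addS _ _) (he_top_join_top a b)

lemma eqv_nat_mul (a b : ℕ) : mulS (natS a) (natS b) ≈ natS (a * b) :=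
  he_trans (he_mulS _ _) (he_top_prod_top a b)

instance : Add Q := ⟨Quotient.map₂ addS (fun _ _ h _ _ h' => addS_congr h h')⟩
instance : Mul Q := ⟨Quotient.map₂ mulS (fun _ _ h _ _ h' => mulS_congr h h')⟩
instance : Zero Q := ⟨⟦natS 0⟧⟩
instance : One Q := ⟨⟦natS 1⟧⟩

instance : CommSemiring Q where
  add := (· + ·)
  mul := (· * ·)
  zero := 0
  one := 1
  nsmul := nsmulRec
  npow := npowRec
  add_assoc := by rintro ⟨x⟩ ⟨y⟩ ⟨z⟩; exact Quotient.sound (eqv_add_assoc x y z)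
  add_comm := by rintro ⟨x⟩ ⟨y⟩; exact Quotient.sound (eqv_add_comm x y)
  zero_add := by
    rintro ⟨x⟩
    exact Quotient.sound (he_trans (eqv_add_comm (natS 0) x) (eqv_add_zero x))
  add_zero := by rintro ⟨x⟩; exact Quotient.sound (eqv_add_zero x)
  mul_assoc := by rintro ⟨x⟩ ⟨y⟩ ⟨z⟩; exact Quotient.sound (eqv_mul_assoc x y z)
  mul_comm := by rintro ⟨x⟩ ⟨y⟩; exact Quotient.sound (eqv_mul_comm x y)
  one_mul := by
    rintro ⟨x⟩
    exact Quotient.sound (he_trans (eqv_mul_comm (natS 1) x) (eqv_mul_one x))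
  mul_one := by rintro ⟨x⟩; exact Quotient.sound (eqv_mul_one x)
  zero_mul := by
    rintro ⟨x⟩
    exact Quotient.sound (he_trans (eqv_mul_comm (natS 0) x) (eqv_mul_zero x))
  mul_zero := by rintro ⟨x⟩; exact Quotient.sound (eqv_mul_zero x)
  left_distrib := by rintro ⟨x⟩ ⟨y⟩ ⟨z⟩; exact Quotient.sound (eqv_left_distrib x y z)
  right_distrib := by
    rintro ⟨x⟩ ⟨y⟩ ⟨z⟩
    exact Quotient.sound (he_trans (eqv_mul_comm (addS x y) z)
      (he_trans (eqv_left_distrib z x y)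
        (addS_congr (eqv_mul_comm z x) (eqv_mul_comm z y))))

/-- The class of a skeleton graph in `Q`. -/
def mkQ (x : Sk) : Q := ⟦x⟧

lemma mkQ_add (x y : Sk) : mkQ x + mkQ y = mkQ (addS x y) := rfl
lemma mkQ_mul (x y : Sk) : mkQ x * mkQ y = mkQ (mulS x y) := rfl
lemma mkQ_eq (x y : Sk) (h : x ≈ y) : mkQ x = mkQ y := Quotient.sound h

lemma natCast_mk (t : ℕ) : ((t : ℕ) : Q) = mkQ (natS t) := by
  induction t with
  | zero => exact Nat.cast_zero
  | succ n ih =>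
    have : ((n + 1 : ℕ) : Q) = ((n : ℕ) : Q) + 1 := by push_cast; ring
    rw [this, ih]
    exact Quotient.sound (eqv_nat_add n 1)

end Skeleton

section OrderQ

lemma cliqueNum_eq_of_homEquiv {α : Type u} {β : Type v} [Fintype α] [Fintype β]
    {G : SimpleGraph α} {H : SimpleGraph β} (h : HomEquiv G H) :
    G.cliqueNum = H.cliqueNum :=
  le_antisymm (cliqueNum_le_of_homEquiv h.1) (cliqueNum_le_of_homEquiv h.2)

/-- The hom preorder on `Q`. -/
def le0Q : Q → Q → Prop :=
  Quotient.lift₂ (fun x y : Sk => Nonempty (x.2 →g y.2)) (by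
    rintro x y x' y' ⟨⟨f⟩, ⟨f'⟩⟩ ⟨⟨g⟩, ⟨g'⟩⟩
    exact propext ⟨fun ⟨h⟩ => ⟨g.comp (h.comp f')⟩, fun ⟨h⟩ => ⟨g'.comp (h.comp f)⟩⟩)

lemma le0Q_mk {x y : Sk} : le0Q (mkQ x) (mkQ y) ↔ Nonempty (x.2 →g y.2) := Iff.rfl

lemma le0Q_refl (x : Q) : le0Q x x := by
  rcases x with ⟨x⟩
  exact ⟨Hom.id⟩

lemma le0Q_trans {x y z : Q} (h : le0Q x y) (h' : le0Q y z) : le0Q x z := by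
  rcases x with ⟨x⟩; rcases y with ⟨y⟩; rcases z with ⟨z⟩
  exact h'.elim fun g => h.elim fun f => ⟨g.comp f⟩

lemma le0Q_of_eqv {x y : Q} (h : x = y) : le0Q x y := h ▸ le0Q_refl x

lemma le0Q_add {x y : Q} (h : le0Q x y) (z : Q) : le0Q (x + z) (y + z) := by
  rcases x with ⟨x⟩; rcases y with ⟨y⟩; rcases z with ⟨z⟩
  obtain ⟨f⟩ := h
  have h1 := (he_addS x z).1
  have h2 := (he_addS y z).2
  exact h2.elim fun g2 => h1.elim fun g1 => ⟨g2.comp ((joinHom f Hom.id).comp g1)⟩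

lemma le0Q_mul {x y : Q} (h : le0Q x y) (z : Q) : le0Q (x * z) (y * z) := by
  rcases x with ⟨x⟩; rcases y with ⟨y⟩; rcases z with ⟨z⟩
  obtain ⟨f⟩ := h
  have h1 := (he_mulS x z).1
  have h2 := (he_mulS y z).2
  exact h2.elim fun g2 => h1.elim fun g1 => ⟨g2.comp ((prodHom f Hom.id).comp g1)⟩

lemma le0Q_nat {p q : ℕ} : le0Q (p : Q) (q : Q) ↔ p ≤ q := by
  rw [natCast_mk, natCast_mk, le0Q_mk]
  constructor
  · intro ⟨f⟩
    have := cliqueNum_le_of_hom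
      (G := (⊤ : SimpleGraph (Fin p))) (H := (⊤ : SimpleGraph (Fin q))) f
    rwa [cliqueNum_top, cliqueNum_top] at this
  · intro h
    exact ⟨⟨Fin.castLE h, fun hadj => fun hc => hadj (Fin.castLE_injective h hc)⟩⟩

lemma le0Q_zero (x : Q) : le0Q 0 x := by
  rcases x with ⟨x⟩
  exact ⟨⟨isEmptyElim (α := Fin (natS 0).1), fun {a} => isEmptyElim a⟩⟩

lemma le0Q_one {x : Q} (h : x ≠ 0) : le0Q 1 x := by
  rcases x with ⟨n, G⟩
  rcases Nat.eq_zero_or_pos n with rfl | hn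
  · exact absurd (Quotient.sound (he_isEmpty G (natS 0).2)) h
  · haveI : Subsingleton (Fin (natS 1).1) := inferInstanceAs (Subsingleton (Fin 1))
    exact ⟨⟨fun _ => ⟨0, hn⟩, fun {a b} hadj => absurd (Subsingleton.elim a b) hadj.ne⟩⟩

lemma le0Q_arch (x : Q) : ∃ N : ℕ, le0Q x (N : Q) := by
  rcases x with ⟨n, G⟩
  refine ⟨n, ?_⟩
  rw [show (Quot.mk Setoid.r ⟨n, G⟩ : Q) = mkQ ⟨n, G⟩ from rfl, natCast_mk]
  apply le0Q_mk.mpr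
  exact ⟨⟨id, fun hadj => hadj.ne⟩⟩

/-- The clique number on `Q`. -/
noncomputable def omQ : Q → ℕ :=
  Quotient.lift (fun x : Sk => x.2.cliqueNum) (fun _ _ h => cliqueNum_eq_of_homEquiv h)

lemma omQ_mk (x : Sk) : omQ (mkQ x) = x.2.cliqueNum := rfl

lemma omQ_mono {x y : Q} (h : le0Q x y) : omQ x ≤ omQ y := by
  rcases x with ⟨x⟩; rcases y with ⟨y⟩
  exact cliqueNum_le_of_homEquiv h

lemma omQ_add (x y : Q) : omQ (x + y) = omQ x + omQ y := by
  rcases x with ⟨x⟩; rcases y with ⟨y⟩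
  show (addS x y).2.cliqueNum = _
  rw [cliqueNum_eq_of_homEquiv (he_addS x y), cliqueNum_join]
  rfl

lemma omQ_nat (t : ℕ) : omQ (t : Q) = t := by
  rw [natCast_mk, omQ_mk]
  exact cliqueNum_top t

lemma omQ_nat_mul (t : ℕ) (x : Q) : omQ ((t : Q) * x) = t * omQ x := by
  rcases x with ⟨x⟩
  rw [natCast_mk]
  show (mulS (natS t) x).2.cliqueNum = t * x.2.cliqueNum
  rw [cliqueNum_eq_of_homEquiv (he_mulS (natS t) x)]
  exact cliqueNum_top_prod t x.2

lemma omQ_mul_le (x : Q) : ∃ C : ℕ, ∀ y : Q, omQ (x * y) ≤ C * omQ y := by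
  rcases x with ⟨x⟩
  refine ⟨x.1, ?_⟩
  rintro ⟨y⟩
  show (mulS x y).2.cliqueNum ≤ x.1 * y.2.cliqueNum
  rw [cliqueNum_eq_of_homEquiv (he_mulS x y)]
  simpa using cliqueNum_prod_le x.2 y.2

lemma le_omQ_mul (x y : Q) : omQ x * omQ y ≤ omQ (x * y) := by
  rcases x with ⟨x⟩; rcases y with ⟨y⟩
  show x.2.cliqueNum * y.2.cliqueNum ≤ (mulS x y).2.cliqueNum
  rw [cliqueNum_eq_of_homEquiv (he_mulS x y)]
  exact le_cliqueNum_prod x.2 y.2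

end OrderQ

section Embed

variable {V : Type} [Fintype V] {W : Type} [Fintype W]

/-- The class in `Q` of an arbitrary finite graph. -/
noncomputable def qk (G : SimpleGraph V) : Q :=
  mkQ ⟨Fintype.card V, G.comap (Fintype.equivFin V).symm⟩

lemma he_qk (G : SimpleGraph V) :
    HomEquiv (G.comap ((Fintype.equivFin V).symm : Fin (Fintype.card V) ≃ V)) G :=
  he_comap _ _

lemma qk_le_of_hom {G : SimpleGraph V} {H : SimpleGraph W} (h : Nonempty (G →g H)) :
    le0Q (qk G) (qk H) := by
  rw [qk, qk]
  apply le0Q_mk.mpr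
  obtain ⟨f⟩ := h
  obtain ⟨u⟩ := (he_qk G).1
  obtain ⟨v⟩ := (he_qk H).2
  exact ⟨v.comp (f.comp u)⟩

lemma qk_homEquiv {G : SimpleGraph V} {H : SimpleGraph W} (h : HomEquiv G H) :
    qk G = qk H :=
  Quotient.sound (he_trans (he_qk G) (he_trans h (he_symm (he_qk H))))

lemma qk_join (G : SimpleGraph V) (H : SimpleGraph W) :
    qk (graphJoin G H) = qk G + qk H := by
  rw [show qk G + qk H = mkQ (addS _ _) from rfl]
  exact Quotient.sound (he_trans (he_qk _) (he_trans
    (he_join_congr (he_symm (he_qk G)) (he_symm (he_qk H))) (he_symm (he_addS _ _))))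

lemma qk_prod (G : SimpleGraph V) (H : SimpleGraph W) :
    qk (disjProd G H) = qk G * qk H := by
  rw [show qk G * qk H = mkQ (mulS _ _) from rfl]
  exact Quotient.sound (he_trans (he_qk _) (he_trans
    (he_prod_congr (he_symm (he_qk G)) (he_symm (he_qk H))) (he_symm (he_mulS _ _))))

lemma qk_top_one : qk (⊤ : SimpleGraph (Fin 1)) = 1 :=
  Quotient.sound (he_trans (he_qk _) (he_refl _))

lemma qk_pow (G : SimpleGraph V) (n : ℕ) : qk (disjPow G n) = (qk G) ^ n := by
  induction n with
  | zero =>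
    rw [pow_zero, ← qk_top_one]
    exact qk_homEquiv (he_pow_zero G)
  | succ n ih =>
    rw [pow_succ, ← ih, ← qk_prod]
    exact qk_homEquiv (he_pow_succ G n)

lemma omQ_qk (G : SimpleGraph V) : omQ (qk G) = G.cliqueNum :=
  cliqueNum_eq_of_homEquiv (he_qk G)

end Embed

section Strassen

/-- A Strassen preorder on `Q`, as a set of pairs. -/
structure IsGood (R : Set (Q × Q)) : Prop where
  base : ∀ {x y : Q}, le0Q x y → (x, y) ∈ R
  trans : ∀ {x y z : Q}, (x, y) ∈ R → (y, z) ∈ R → (x, z) ∈ R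
  add_right : ∀ {x y : Q} (z : Q), (x, y) ∈ R → (x + z, y + z) ∈ R
  mul_right : ∀ {x y : Q} (z : Q), (x, y) ∈ R → (x * z, y * z) ∈ R
  nat : ∀ {p q : ℕ}, ((p : Q), (q : Q)) ∈ R → p ≤ q

namespace IsGood

variable {R : Set (Q × Q)}

lemma refl (hR : IsGood R) (x : Q) : (x, x) ∈ R := hR.base (le0Q_refl x)

lemma of_eq (hR : IsGood R) {x y : Q} (h : x = y) : (x, y) ∈ R := h ▸ hR.refl x

lemma add_both (hR : IsGood R) {x y u v : Q} (h : (x, y) ∈ R) (h' : (u, v) ∈ R) :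
    (x + u, y + v) ∈ R := by
  have h1 := hR.add_right u h
  have h2 := hR.add_right y h'
  rw [add_comm u y, add_comm v y] at h2
  exact hR.trans h1 h2

lemma mul_both (hR : IsGood R) {x y u v : Q} (h : (x, y) ∈ R) (h' : (u, v) ∈ R) :
    (x * u, y * v) ∈ R := by
  have h1 := hR.mul_right u h
  have h2 := hR.mul_right y h'
  rw [mul_comm u y, mul_comm v y] at h2
  exact hR.trans h1 h2

end IsGood

/-- The one-pair extension of a Strassen preorder. -/
def extR (R : Set (Q × Q)) (a b : Q) : Set (Q × Q) :=
  {p | ∃ c : Q, (p.1 + c * b, p.2 + c * a) ∈ R}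

lemma extR_subset {R : Set (Q × Q)} (hR : IsGood R) (a b : Q) : R ⊆ extR R a b := by
  rintro ⟨u, v⟩ h
  exact ⟨0, by simpa using h⟩

lemma extR_mem {R : Set (Q × Q)} (hR : IsGood R) (a b : Q) : (a, b) ∈ extR R a b :=
  ⟨1, by rw [one_mul, one_mul, add_comm a b]; exact hR.refl _⟩

lemma extR_good_except {R : Set (Q × Q)} (hR : IsGood R) (a b : Q) :
    (∀ {x y : Q}, le0Q x y → (x, y) ∈ extR R a b) ∧
    (∀ {x y z : Q}, (x, y) ∈ extR R a b → (y, z) ∈ extR R a b → (x, z) ∈ extR R a b) ∧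
    (∀ {x y : Q} (z : Q), (x, y) ∈ extR R a b → (x + z, y + z) ∈ extR R a b) ∧
    (∀ {x y : Q} (z : Q), (x, y) ∈ extR R a b → (x * z, y * z) ∈ extR R a b) := by
  refine ⟨fun h => (extR_subset hR a b) (hR.base h), ?_, ?_, ?_⟩
  · rintro x y z ⟨c, hc⟩ ⟨d, hd⟩
    refine ⟨c + d, ?_⟩
    have h1 := hR.add_right (d * b) hc
    have h2 := hR.add_right (c * a) hd
    have e1 : x + c * b + d * b = x + (c + d) * b := by ring
    have e2 : y + c * a + d * b = y + d * b + c * a := by ring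
    have e3 : z + d * a + c * a = z + (c + d) * a := by ring
    rw [e1, e2] at h1
    rw [e3] at h2
    exact hR.trans h1 h2
  · rintro x y z ⟨c, hc⟩
    refine ⟨c, ?_⟩
    have := hR.add_right z hc
    have e1 : x + c * b + z = x + z + c * b := by ring
    have e2 : y + c * a + z = y + z + c * a := by ring
    rw [e1, e2] at this
    exact this
  · rintro x y z ⟨c, hc⟩
    refine ⟨c * z, ?_⟩
    have := hR.mul_right z hc
    have e1 : (x + c * b) * z = x * z + c * z * b := by ring
    have e2 : (y + c * a) * z = y * z + c * z * a := by ring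
    rw [e1, e2] at this
    exact this

lemma maximal_total {M : Set (Q × Q)} (hM : IsGood M)
    (hmax : ∀ R', IsGood R' → M ⊆ R' → R' = M) (x y : Q) :
    (x, y) ∈ M ∨ (y, x) ∈ M := by
  by_contra hcon
  push_neg at hcon
  obtain ⟨hxy, hyx⟩ := hcon
  -- both one-pair extensions must fail the naturals axiom
  have key : ∀ a b : Q, (a, b) ∉ M → ∃ p q : ℕ, q < p ∧ (((p : Q)), ((q : Q))) ∈ extR M a b := by
    intro a b hab
    by_contra hno
    push_neg at hno
    obtain ⟨hbase, htrans, hadd, hmul⟩ := extR_good_except hM a b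
    have hgood : IsGood (extR M a b) := by
      refine ⟨hbase, htrans, hadd, hmul, ?_⟩
      intro p q hpq
      by_contra hle
      exact hno p q (by omega) hpq
    exact hab ((hmax _ hgood (extR_subset hM a b)) ▸ extR_mem hM a b)
  obtain ⟨p, q, hpq, c, hc0'⟩ := key x y hxy
  obtain ⟨p', q', hpq', d, hd0'⟩ := key y x hyx
  have hc : ((p : Q) + c * y, (q : Q) + c * x) ∈ M := hc0'
  have hd : ((p' : Q) + d * x, (q' : Q) + d * y) ∈ M := hd0'
  clear hc0' hd0'
  -- if c = 0 or d = 0 we get an immediate contradiction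
  rcases eq_or_ne c 0 with rfl | hc0
  · rw [zero_mul, zero_mul, add_zero, add_zero] at hc
    exact absurd (hM.nat hc) (by omega)
  rcases eq_or_ne d 0 with rfl | hd0
  · rw [zero_mul, zero_mul, add_zero, add_zero] at hd
    exact absurd (hM.nat hd) (by omega)
  -- combine the two failures
  obtain ⟨A, hA⟩ : ∃ A : ℕ, p = q + (A + 1) := ⟨p - q - 1, by omega⟩
  obtain ⟨A', hA'⟩ : ∃ A' : ℕ, p' = q' + (A' + 1) := ⟨p' - q' - 1, by omega⟩
  subst hA
  subst hA'
  have hc2 := hM.mul_right d hc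
  have hd2 := hM.mul_right c hd
  have hsum := hM.add_both hc2 hd2
  set w : Q := ((A + 1 : ℕ) : Q) * d + ((A' + 1 : ℕ) : Q) * c with hw
  set v : Q := (q : Q) * d + (q' : Q) * c with hv
  set e : Q := c * d * (x + y) with he
  have hkey : (v + w + e, v + e) ∈ M := by
    have e1 : (((q + (A + 1) : ℕ) : Q) + c * y) * d + (((q' + (A' + 1) : ℕ) : Q) + d * x) * c
        = v + w + e := by
      rw [hw, hv, he]
      push_cast
      ring
    have e2 : ((q : Q) + c * x) * d + ((q' : Q) + d * y) * c = v + e := by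
      rw [hv, he]
      push_cast
      ring
    rw [e1, e2] at hsum
    exact hsum
  -- iterate
  have hiter : ∀ k : ℕ, (v + (k + 1 : Q) * w + e, v + e) ∈ M := by
    intro k
    induction k with
    | zero => simpa using hkey
    | succ k ih =>
      have h1 := hM.add_right w ih
      have e1 : v + (k + 1 : Q) * w + e + w = v + ((k : ℕ) + 1 + 1 : Q) * w + e := by
        push_cast; ring
      have e2 : v + e + w = v + (1 : Q) * w + e := by ring
      rw [e1, e2] at h1
      exact hM.trans h1 (by simpa using hkey)
  -- 2 ≤ w in M
  have h2w : (((2 : ℕ) : Q), w) ∈ M := by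
    have h1c : ((1 : Q), c) ∈ M := hM.base (le0Q_one hc0)
    have h1d : ((1 : Q), d) ∈ M := hM.base (le0Q_one hd0)
    have had : (d, ((A + 1 : ℕ) : Q) * d) ∈ M := by
      have h1 : le0Q ((1 : ℕ) : Q) ((A + 1 : ℕ) : Q) := le0Q_nat.mpr (by omega)
      have h2 := le0Q_mul h1 d
      rw [Nat.cast_one, one_mul] at h2
      exact hM.base h2
    have hac : (c, ((A' + 1 : ℕ) : Q) * c) ∈ M := by
      have h1 : le0Q ((1 : ℕ) : Q) ((A' + 1 : ℕ) : Q) := le0Q_nat.mpr (by omega)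
      have h2 := le0Q_mul h1 c
      rw [Nat.cast_one, one_mul] at h2
      exact hM.base h2
    have h1ad : ((1 : Q), ((A + 1 : ℕ) : Q) * d) ∈ M := hM.trans h1d had
    have h1ac : ((1 : Q), ((A' + 1 : ℕ) : Q) * c) ∈ M := hM.trans h1c hac
    have hsum2 := hM.add_both h1ad h1ac
    refine hM.trans (hM.of_eq ?_) hsum2
    push_cast
    ring
  -- for every k, 2(k+1) ≤ N in M, contradiction
  obtain ⟨N, hN⟩ := le0Q_arch (v + e)
  have hfin : ∀ k : ℕ, ((2 * (k + 1) : ℕ) ≤ N) := by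
    intro k
    have m1 := hM.mul_right ((k : Q) + 1) h2w
    have c1 : (((2 * (k + 1) : ℕ) : Q), w * ((k : Q) + 1)) ∈ M := by
      refine hM.trans (hM.of_eq ?_) m1
      push_cast
      ring
    have c2 : (w * ((k : Q) + 1), v + ((k : Q) + 1) * w + e) ∈ M := by
      have z := le0Q_add (le0Q_zero (v + e)) (((k : Q) + 1) * w)
      have z2 := hM.base z
      refine hM.trans (hM.of_eq (by ring)) (hM.trans z2 (hM.of_eq (by ring)))
    have c3 := hiter k
    have c4 : (v + e, ((N : ℕ) : Q)) ∈ M := hM.base hN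
    exact hM.nat (hM.trans c1 (hM.trans c2 (hM.trans c3 c4)))
  have := hfin N
  omega

end Strassen

section ZornEta

lemma exists_total_good {R0 : Set (Q × Q)} (h0 : IsGood R0) :
    ∃ M, IsGood M ∧ R0 ⊆ M ∧ ∀ x y, (x, y) ∈ M ∨ (y, x) ∈ M := by
  obtain ⟨M, hmem, hmax⟩ := zorn_subset_nonempty {R | IsGood R} (fun c hc hchain hne => by
    refine ⟨⋃₀ c, ?_, fun s hs => Set.subset_sUnion_of_mem hs⟩
    obtain ⟨R1, hR1⟩ := hne
    have mem_of : ∀ {p : Q × Q} {R : Set (Q × Q)}, R ∈ c → p ∈ R → p ∈ ⋃₀ c :=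
      fun hR hp => Set.mem_sUnion.mpr ⟨_, hR, hp⟩
    constructor
    · exact fun h => mem_of hR1 ((hc hR1).base h)
    · rintro x y z hxy hyz
      obtain ⟨Ra, hRa, hxy⟩ := Set.mem_sUnion.mp hxy
      obtain ⟨Rb, hRb, hyz⟩ := Set.mem_sUnion.mp hyz
      rcases eq_or_ne Ra Rb with rfl | hne'
      · exact mem_of hRa ((hc hRa).trans hxy hyz)
      · rcases hchain hRa hRb hne' with h | h
        · exact mem_of hRb ((hc hRb).trans (h hxy) hyz)
        · exact mem_of hRa ((hc hRa).trans hxy (h hyz))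
    · rintro x y z hxy
      obtain ⟨Ra, hRa, hxy⟩ := Set.mem_sUnion.mp hxy
      exact mem_of hRa ((hc hRa).add_right z hxy)
    · rintro x y z hxy
      obtain ⟨Ra, hRa, hxy⟩ := Set.mem_sUnion.mp hxy
      exact mem_of hRa ((hc hRa).mul_right z hxy)
    · rintro p q hpq
      obtain ⟨Ra, hRa, hpq⟩ := Set.mem_sUnion.mp hpq
      exact (hc hRa).nat hpq) R0 h0
  exact ⟨M, hmax.1, hmem, maximal_total hmax.1
    (fun R' hR' hsub' => le_antisymm (hmax.2 hR' hsub') hsub')⟩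

variable (M : Set (Q × Q))

/-- Upper Dedekind cut of an element. -/
def UBs (x : Q) : Set ℝ := {r | ∃ a b : ℕ, 0 < b ∧ ((b : Q) * x, (a : Q)) ∈ M ∧ r = a / b}

/-- Lower Dedekind cut of an element. -/
def LBs (x : Q) : Set ℝ := {r | ∃ a b : ℕ, 0 < b ∧ ((a : Q), (b : Q) * x) ∈ M ∧ r = a / b}

/-- The invariant associated to a total Strassen preorder. -/
noncomputable def etaM (x : Q) : ℝ := sInf (UBs M x)

variable {M}

lemma UBs_nonneg {x : Q} {r : ℝ} (hr : r ∈ UBs M x) : 0 ≤ r := by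
  obtain ⟨a, b, hb, _, rfl⟩ := hr
  positivity

lemma LBs_nonneg {x : Q} {r : ℝ} (hr : r ∈ LBs M x) : 0 ≤ r := by
  obtain ⟨a, b, hb, _, rfl⟩ := hr
  positivity

lemma UBs_bddBelow (x : Q) : BddBelow (UBs M x) := ⟨0, fun _ hr => UBs_nonneg hr⟩

lemma UBs_nonempty (hM : IsGood M) (x : Q) : (UBs M x).Nonempty := by
  obtain ⟨N, hN⟩ := le0Q_arch x
  refine ⟨(N : ℝ), N, 1, one_pos, ?_, by norm_num⟩
  refine hM.trans (hM.of_eq ?_) (hM.base hN)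
  push_cast
  ring

lemma zero_mem_LBs (hM : IsGood M) (x : Q) : (0 : ℝ) ∈ LBs M x := by
  refine ⟨0, 1, one_pos, ?_, by norm_num⟩
  refine hM.trans (hM.of_eq Nat.cast_zero) (hM.base (le0Q_zero _))

lemma LBs_nonempty (hM : IsGood M) (x : Q) : (LBs M x).Nonempty := ⟨0, zero_mem_LBs hM x⟩

lemma LBs_le_UBs (hM : IsGood M) {x : Q} {r s : ℝ} (hr : r ∈ LBs M x) (hs : s ∈ UBs M x) :
    r ≤ s := by
  obtain ⟨a, b, hb, hab, rfl⟩ := hr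
  obtain ⟨a', b', hb', hab', rfl⟩ := hs
  have h1 := hM.mul_right ((b' : Q)) hab
  have h2 := hM.mul_right ((b : Q)) hab'
  have h3 : (((a * b' : ℕ) : Q), ((a' * b : ℕ) : Q)) ∈ M := by
    refine hM.trans (hM.of_eq ?_) (hM.trans h1 (hM.trans (hM.of_eq ?_)
      (hM.trans h2 (hM.of_eq ?_)))) <;> · push_cast; ring
  have h4 := hM.nat h3
  rw [div_le_div_iff₀ (by positivity) (by positivity)]
  exact_mod_cast (by omega : a * b' ≤ a' * b)

lemma LBs_bddAbove (hM : IsGood M) (x : Q) : BddAbove (LBs M x) := by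
  obtain ⟨s, hs⟩ := UBs_nonempty hM x
  exact ⟨s, fun r hr => LBs_le_UBs hM hr hs⟩

lemma etaM_nonneg (hM : IsGood M) (x : Q) : 0 ≤ etaM M x :=
  le_csInf (UBs_nonempty hM x) (fun _ hr => UBs_nonneg hr)

lemma etaM_eq_sSup (hM : IsGood M) (htot : ∀ x y, (x, y) ∈ M ∨ (y, x) ∈ M) (x : Q) :
    etaM M x = sSup (LBs M x) := by
  apply le_antisymm
  · by_contra hcon
    push_neg at hcon
    obtain ⟨qq, h1, h2⟩ := exists_rat_btwn hcon
    have hq0 : (0 : ℝ) < (qq : ℝ) :=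
      lt_of_le_of_lt (le_csSup (LBs_bddAbove hM x) (zero_mem_LBs hM x)) h1
    have hnum : (0 : ℤ) ≤ qq.num := (Rat.num_pos.mpr (Rat.cast_pos.mp hq0)).le
    set a : ℕ := qq.num.toNat with ha
    set b : ℕ := qq.den with hb
    have hb0 : 0 < b := qq.pos
    have hqq : (qq : ℝ) = (a : ℝ) / (b : ℝ) := by
      rw [Rat.cast_def]
      congr 1
      exact_mod_cast (congrArg (fun z : ℤ => (z : ℝ)) (Int.toNat_of_nonneg hnum)).symm
    rcases htot ((b : Q) * x) ((a : Q)) with hmem | hmem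
    · have hub : ((a : ℝ) / b) ∈ UBs M x := ⟨a, b, hb0, hmem, rfl⟩
      have := csInf_le (UBs_bddBelow x) hub
      rw [← hqq] at this
      exact absurd (lt_of_le_of_lt this h2) (lt_irrefl _)
    · have hlb : ((a : ℝ) / b) ∈ LBs M x := ⟨a, b, hb0, hmem, rfl⟩
      have := le_csSup (LBs_bddAbove hM x) hlb
      rw [← hqq] at this
      exact absurd (lt_of_lt_of_le h1 this) (lt_irrefl _)
  · exact csSup_le (LBs_nonempty hM x)
      (fun r hr => le_csInf (UBs_nonempty hM x) (fun s hs => LBs_le_UBs hM hr hs))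

lemma sSup_LBs_nonneg (hM : IsGood M) (x : Q) : 0 ≤ sSup (LBs M x) :=
  le_csSup (LBs_bddAbove hM x) (zero_mem_LBs hM x)

lemma etaM_mono (hM : IsGood M) {x y : Q} (hxy : (x, y) ∈ M) : etaM M x ≤ etaM M y := by
  refine csInf_le_csInf (UBs_bddBelow x) (UBs_nonempty hM y) ?_
  rintro r ⟨a, b, hb, hab, rfl⟩
  refine ⟨a, b, hb, ?_, rfl⟩
  have := hM.mul_right ((b : Q)) hxy
  rw [mul_comm x _, mul_comm y _] at this
  exact hM.trans this hab

lemma etaM_nat (hM : IsGood M) (t : ℕ) : etaM M ((t : ℕ) : Q) = t := by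
  apply le_antisymm
  · refine csInf_le (UBs_bddBelow _) ⟨t, 1, one_pos, ?_, by norm_num⟩
    refine hM.of_eq ?_
    push_cast
    ring
  · refine le_csInf (UBs_nonempty hM _) ?_
    rintro r ⟨a, b, hb, hab, rfl⟩
    have h2 : (((b * t : ℕ) : Q), ((a : ℕ) : Q)) ∈ M :=
      hM.trans (hM.of_eq (by push_cast; ring)) hab
    have h3 := hM.nat h2
    rw [le_div_iff₀ (by positivity)]
    have h4 : t * b ≤ a := by rwa [Nat.mul_comm b t] at h3
    exact_mod_cast h4

lemma UBs_add (hM : IsGood M) {x y : Q} {r s : ℝ} (hr : r ∈ UBs M x) (hs : s ∈ UBs M y) :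
    r + s ∈ UBs M (x + y) := by
  obtain ⟨a, b, hb, hab, rfl⟩ := hr
  obtain ⟨a', b', hb', hab', rfl⟩ := hs
  refine ⟨a * b' + a' * b, b * b', by positivity, ?_, ?_⟩
  · have h1 := hM.mul_right ((b' : Q)) hab
    have h2 := hM.mul_right ((b : Q)) hab'
    have h3 := hM.add_both h1 h2
    refine hM.trans (hM.of_eq ?_) (hM.trans h3 (hM.of_eq ?_)) <;> · push_cast; ring
  · rw [div_add_div _ _ (by positivity : ((b:ℝ)) ≠ 0) (by positivity : ((b':ℝ)) ≠ 0)]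
    push_cast
    ring

lemma LBs_add (hM : IsGood M) {x y : Q} {r s : ℝ} (hr : r ∈ LBs M x) (hs : s ∈ LBs M y) :
    r + s ∈ LBs M (x + y) := by
  obtain ⟨a, b, hb, hab, rfl⟩ := hr
  obtain ⟨a', b', hb', hab', rfl⟩ := hs
  refine ⟨a * b' + a' * b, b * b', by positivity, ?_, ?_⟩
  · have h1 := hM.mul_right ((b' : Q)) hab
    have h2 := hM.mul_right ((b : Q)) hab'
    have h3 := hM.add_both h1 h2
    refine hM.trans (hM.of_eq ?_) (hM.trans h3 (hM.of_eq ?_)) <;> · push_cast; ring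
  · rw [div_add_div _ _ (by positivity : ((b:ℝ)) ≠ 0) (by positivity : ((b':ℝ)) ≠ 0)]
    push_cast
    ring

lemma UBs_mul (hM : IsGood M) {x y : Q} {r s : ℝ} (hr : r ∈ UBs M x) (hs : s ∈ UBs M y) :
    r * s ∈ UBs M (x * y) := by
  obtain ⟨a, b, hb, hab, rfl⟩ := hr
  obtain ⟨a', b', hb', hab', rfl⟩ := hs
  refine ⟨a * a', b * b', by positivity, ?_, ?_⟩
  · have h3 := hM.mul_both hab hab'
    refine hM.trans (hM.of_eq ?_) (hM.trans h3 (hM.of_eq ?_)) <;> · push_cast; ring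
  · rw [div_mul_div_comm]
    push_cast
    ring

lemma LBs_mul (hM : IsGood M) {x y : Q} {r s : ℝ} (hr : r ∈ LBs M x) (hs : s ∈ LBs M y) :
    r * s ∈ LBs M (x * y) := by
  obtain ⟨a, b, hb, hab, rfl⟩ := hr
  obtain ⟨a', b', hb', hab', rfl⟩ := hs
  refine ⟨a * a', b * b', by positivity, ?_, ?_⟩
  · have h3 := hM.mul_both hab hab'
    refine hM.trans (hM.of_eq ?_) (hM.trans h3 (hM.of_eq ?_)) <;> · push_cast; ring
  · rw [div_mul_div_comm]
    push_cast
    ring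

lemma etaM_add (hM : IsGood M) (htot : ∀ x y, (x, y) ∈ M ∨ (y, x) ∈ M) (x y : Q) :
    etaM M (x + y) = etaM M x + etaM M y := by
  apply le_antisymm
  · have H : ∀ r ∈ UBs M x, ∀ s ∈ UBs M y, etaM M (x + y) ≤ r + s :=
      fun r hr s hs => csInf_le (UBs_bddBelow _) (UBs_add hM hr hs)
    have H2 : ∀ r ∈ UBs M x, etaM M (x + y) - r ≤ etaM M y := fun r hr =>
      le_csInf (UBs_nonempty hM y) (fun s hs => by linarith [H r hr s hs])
    have H3 : etaM M (x + y) - etaM M y ≤ etaM M x := le_csInf (UBs_nonempty hM x) (fun r hr =>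
      (by linarith [H2 r hr] : etaM M (x + y) - etaM M y ≤ r))
    linarith
  · rw [etaM_eq_sSup hM htot x, etaM_eq_sSup hM htot y, etaM_eq_sSup hM htot (x + y)]
    have H : ∀ r ∈ LBs M x, ∀ s ∈ LBs M y, r + s ≤ sSup (LBs M (x + y)) :=
      fun r hr s hs => le_csSup (LBs_bddAbove hM _) (LBs_add hM hr hs)
    have H2 : ∀ r ∈ LBs M x, sSup (LBs M y) ≤ sSup (LBs M (x + y)) - r := fun r hr =>
      csSup_le (LBs_nonempty hM y) (fun s hs => by linarith [H r hr s hs])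
    have H3 := csSup_le (LBs_nonempty hM x) (fun r hr =>
      (by linarith [H2 r hr] : r ≤ sSup (LBs M (x + y)) - sSup (LBs M y)))
    linarith

lemma etaM_mul (hM : IsGood M) (htot : ∀ x y, (x, y) ∈ M ∨ (y, x) ∈ M) (x y : Q) :
    etaM M (x * y) = etaM M x * etaM M y := by
  apply le_antisymm
  · have step1 : ∀ s ∈ UBs M y, etaM M (x * y) ≤ etaM M x * s := by
      intro s hs
      rcases eq_or_lt_of_le (UBs_nonneg hs) with h0 | h0
      · obtain ⟨r, hr⟩ := UBs_nonempty hM x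
        have := csInf_le (UBs_bddBelow _) (UBs_mul hM hr hs)
        rw [← h0] at this ⊢
        rw [mul_zero]; exact this.trans (le_of_eq (mul_zero r))
      · have hd : ∀ r ∈ UBs M x, etaM M (x * y) / s ≤ r := fun r hr =>
          (div_le_iff₀ h0).mpr (csInf_le (UBs_bddBelow _) (UBs_mul hM hr hs))
        have := le_csInf (UBs_nonempty hM x) hd
        exact (div_le_iff₀ h0).mp this
    rcases eq_or_lt_of_le (etaM_nonneg hM x) with h0 | h0
    · obtain ⟨s, hs⟩ := UBs_nonempty hM y
      have := step1 s hs
      rw [← h0] at this ⊢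
      simpa using this.trans (le_of_eq (zero_mul s))
    · have hd : ∀ s ∈ UBs M y, etaM M (x * y) / etaM M x ≤ s := fun s hs =>
        (div_le_iff₀' h0).mpr (step1 s hs)
      have := le_csInf (UBs_nonempty hM y) hd
      exact (div_le_iff₀' h0).mp this
  · rw [etaM_eq_sSup hM htot x, etaM_eq_sSup hM htot y, etaM_eq_sSup hM htot (x * y)]
    have step1 : ∀ r ∈ LBs M x, r * sSup (LBs M y) ≤ sSup (LBs M (x * y)) := by
      intro r hr
      rcases eq_or_lt_of_le (LBs_nonneg hr) with h0 | h0
      · rw [← h0, zero_mul]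
        exact sSup_LBs_nonneg hM _
      · have hd : ∀ s ∈ LBs M y, s ≤ sSup (LBs M (x * y)) / r := fun s hs =>
          (le_div_iff₀' h0).mpr (le_csSup (LBs_bddAbove hM _) (LBs_mul hM hr hs))
        have := csSup_le (LBs_nonempty hM y) hd
        exact (le_div_iff₀' h0).mp this
    rcases eq_or_lt_of_le (sSup_LBs_nonneg hM y) with h0 | h0
    · rw [← h0, mul_zero]
      exact sSup_LBs_nonneg hM _
    · have hd : ∀ r ∈ LBs M x, r ≤ sSup (LBs M (x * y)) / sSup (LBs M y) := fun r hr =>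
        (le_div_iff₀ h0).mpr (step1 r hr)
      have := csSup_le (LBs_nonempty hM x) hd
      exact (le_div_iff₀ h0).mp this

end ZornEta

section Invariant

/-- The graph invariant attached to a total Strassen preorder. -/
noncomputable def invOf (M : Set (Q × Q)) (hM : IsGood M)
    (htot : ∀ x y, (x, y) ∈ M ∨ (y, x) ∈ M) : SRInvariant where
  eta := fun {W} [Fintype W] H => etaM M (qk H)
  eta_one := by
    show etaM M (qk (⊤ : SimpleGraph (Fin 1))) = 1
    rw [qk_top_one, show (1 : Q) = ((1 : ℕ) : Q) from (Nat.cast_one).symm, etaM_nat hM]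
    norm_num
  eta_mono := fun G H h => etaM_mono hM (hM.base (qk_le_of_hom h))
  eta_add := fun G H => by
    show etaM M (qk (graphJoin G H)) = etaM M (qk G) + etaM M (qk H)
    rw [qk_join, etaM_add hM htot]
  eta_mul := fun G H => by
    show etaM M (qk (disjProd G H)) = etaM M (qk G) * etaM M (qk H)
    rw [qk_prod, etaM_mul hM htot]

lemma etaM_pow {M : Set (Q × Q)} (hM : IsGood M)
    (htot : ∀ x y, (x, y) ∈ M ∨ (y, x) ∈ M) (x : Q) (n : ℕ) :
    etaM M (x ^ n) = etaM M x ^ n := by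
  induction n with
  | zero =>
    rw [pow_zero, pow_zero, show (1 : Q) = ((1 : ℕ) : Q) from (Nat.cast_one).symm, etaM_nat hM]
    norm_num
  | succ n ih => rw [pow_succ, pow_succ, etaM_mul hM htot, ih]

/-- Abstract invariants agree on hom-equivalent graphs. -/
lemma eta_homEquiv (η : SRInvariant) {V W : Type} [Fintype V] [Fintype W]
    {G : SimpleGraph V} {H : SimpleGraph W} (h : HomEquiv G H) : η.eta G = η.eta H :=
  le_antisymm (η.eta_mono _ _ h.1) (η.eta_mono _ _ h.2)

lemma eta_bot_zero (η : SRInvariant) : η.eta (⊥ : SimpleGraph (Fin 0)) = 0 := by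
  have h := η.eta_add (⊥ : SimpleGraph (Fin 0)) (⊥ : SimpleGraph (Fin 0))
  have h2 := eta_homEquiv η (he_join_bot (⊥ : SimpleGraph (Fin 0)))
  rw [h2] at h
  linarith

lemma eta_top (η : SRInvariant) (t : ℕ) : η.eta (⊤ : SimpleGraph (Fin t)) = t := by
  induction t with
  | zero =>
    rw [eta_homEquiv η (he_isEmpty (⊤ : SimpleGraph (Fin 0)) (⊥ : SimpleGraph (Fin 0)))]
    rw [eta_bot_zero]
    norm_num
  | succ t ih =>
    have h := eta_homEquiv η (he_top_join_top t 1)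
    rw [η.eta_add, ih, η.eta_one] at h
    rw [← h]
    push_cast
    ring

lemma eta_pow (η : SRInvariant) {V : Type} [Fintype V] (G : SimpleGraph V) (n : ℕ) :
    η.eta (disjPow G n) = (η.eta G) ^ n := by
  induction n with
  | zero =>
    rw [eta_homEquiv η (he_pow_zero G), pow_zero]
    have := eta_top η 1
    simpa using this
  | succ n ih =>
    rw [eta_homEquiv η (he_pow_succ G n), η.eta_mul, ih, pow_succ]

lemma om_le_eta (η : SRInvariant) {W : Type} [Fintype W] (H : SimpleGraph W) :
    (H.cliqueNum : ℝ) ≤ η.eta H := by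
  obtain ⟨s, hs⟩ := H.exists_isNClique_cliqueNum
  have hcard : Fintype.card ↥s = H.cliqueNum := by rw [Fintype.card_coe, hs.2]
  have hom : Nonempty ((⊤ : SimpleGraph (Fin H.cliqueNum)) →g H) := by
    let e : Fin H.cliqueNum ≃ ↥s := (Fintype.equivFinOfCardEq hcard).symm
    refine ⟨⟨fun i => ((e i : ↥s) : W), ?_⟩⟩
    intro i j hij
    have hne : i ≠ j := by simpa using hij
    exact hs.1 (Finset.mem_coe.mpr (e i).2) (Finset.mem_coe.mpr (e j).2)
      (fun hc => hne (e.injective (Subtype.ext hc)))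
  have := η.eta_mono _ _ hom
  rwa [eta_top η] at this

lemma one_le_eta (η : SRInvariant) {W : Type} [Fintype W] [Nonempty W] (H : SimpleGraph W) :
    1 ≤ η.eta H := by
  inhabit W
  have hom : Nonempty ((⊤ : SimpleGraph (Fin 1)) →g H) :=
    ⟨⟨fun _ => default, fun {a b} h => absurd (Subsingleton.elim a b) h.ne⟩⟩
  have := η.eta_mono _ _ hom
  rwa [η.eta_one] at this

end Invariant

section Rpow

lemma rpow_pow_cancel {a : ℝ} (ha : 0 ≤ a) {n : ℕ} (hn : 1 ≤ n) :
    (a ^ ((1 : ℝ) / n)) ^ n = a := by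
  rw [← Real.rpow_natCast (a ^ ((1 : ℝ) / n)) n, ← Real.rpow_mul ha]
  rw [one_div, inv_mul_cancel₀ (Nat.cast_ne_zero.mpr (by omega) : ((n:ℝ)) ≠ 0), Real.rpow_one]

lemma pow_rpow_cancel {a : ℝ} (ha : 0 ≤ a) {n : ℕ} (hn : 1 ≤ n) :
    ((a ^ n : ℝ)) ^ ((1 : ℝ) / n) = a := by
  rw [← Real.rpow_natCast a n, ← Real.rpow_mul ha]
  rw [mul_one_div, div_self (Nat.cast_ne_zero.mpr (by omega) : ((n:ℝ)) ≠ 0), Real.rpow_one]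

end Rpow

section Main

lemma le0Q_add_both {a b u v : Q} (h : le0Q a b) (h' : le0Q u v) : le0Q (a + u) (b + v) := by
  have h1 := le0Q_add h u
  have h2 := le0Q_add h' b
  rw [add_comm u b, add_comm v b] at h2
  exact le0Q_trans h1 h2

variable {V : Type} [Fintype V] [Nonempty V]

/-- The set of normalized clique numbers of powers. -/
def thetaSet (G : SimpleGraph V) : Set ℝ :=
  {x : ℝ | ∃ n : ℕ, 1 ≤ n ∧
      x = (SimpleGraph.cliqueNum (disjPow G n) : ℝ) ^ ((1 : ℝ) / n)}

/-- The complementary Shannon capacity. -/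
noncomputable def theta (G : SimpleGraph V) : ℝ := sSup (thetaSet G)

lemma thetaSet_nonempty (G : SimpleGraph V) : (thetaSet G).Nonempty :=
  ⟨_, 1, le_refl 1, rfl⟩

lemma thetaSet_bddAbove (G : SimpleGraph V) : BddAbove (thetaSet G) := by
  refine ⟨(Fintype.card V : ℝ), ?_⟩
  rintro x ⟨n, hn, rfl⟩
  have h1 : (disjPow G n).cliqueNum ≤ Fintype.card V ^ n := by
    have := cliqueNum_le_card (disjPow G n)
    rwa [Fintype.card_fun, Fintype.card_fin] at this
  calc ((disjPow G n).cliqueNum : ℝ) ^ ((1 : ℝ) / n)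
      ≤ ((Fintype.card V ^ n : ℕ) : ℝ) ^ ((1 : ℝ) / n) :=
        Real.rpow_le_rpow (by positivity) (by exact_mod_cast h1) (by positivity)
    _ = (Fintype.card V : ℝ) := by
        push_cast
        exact pow_rpow_cancel (by positivity) hn

lemma one_le_theta (G : SimpleGraph V) : 1 ≤ theta G := by
  show (1 : ℝ) ≤ sSup (thetaSet G)
  have hmem : ((disjPow G 1).cliqueNum : ℝ) ∈ thetaSet G :=
    ⟨1, le_refl 1, by rw [Nat.cast_one, div_one, Real.rpow_one]⟩
  have h1 := le_csSup (thetaSet_bddAbove G) hmem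
  have h2 : (1 : ℝ) ≤ ((disjPow G 1).cliqueNum : ℝ) := by
    have : 1 ≤ (disjPow G 1).cliqueNum := cliqueNum_pos
    exact_mod_cast this
  linarith

lemma om_le_theta_pow (G : SimpleGraph V) {n : ℕ} (hn : 1 ≤ n) :
    ((disjPow G n).cliqueNum : ℝ) ≤ theta G ^ n := by
  have hmem : ((disjPow G n).cliqueNum : ℝ) ^ ((1 : ℝ) / n) ∈ thetaSet G := ⟨n, hn, rfl⟩
  have hx := le_csSup (thetaSet_bddAbove G) hmem
  calc ((disjPow G n).cliqueNum : ℝ)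
      = (((disjPow G n).cliqueNum : ℝ) ^ ((1 : ℝ) / n)) ^ n :=
        (rpow_pow_cancel (by positivity) hn).symm
    _ ≤ theta G ^ n := pow_le_pow_left₀ (by positivity) hx n

/-- The hom preorder, as a set of pairs. -/
def baseR : Set (Q × Q) := {p : Q × Q | le0Q p.1 p.2}

lemma baseR_good : IsGood baseR :=
  ⟨fun h => h, le0Q_trans, fun z h => le0Q_add h z, fun z h => le0Q_mul h z,
    fun h => le0Q_nat.mp h⟩

/-- Telescoping auxiliary graphs. -/
def Pfun (h : Q) (m : ℕ) : ℕ → Q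
  | 0 => 1
  | t + 1 => (m : Q) * Pfun h m t + h ^ (t + 1)

def Jfun (h c : Q) (m : ℕ) : ℕ → Q
  | 0 => 0
  | t + 1 => (m : Q) * Jfun h c m t + c * (m : Q) * h ^ (t + 1)

lemma rel_iter {p q m : ℕ} {c h : Q}
    (hc : le0Q ((p : Q) + c * (m : Q)) ((q : Q) + c * h)) :
    ∀ t, le0Q ((p : Q) * Pfun h m t + c * (m : Q) ^ (t + 1) + Jfun h c m t)
      ((q : Q) * Pfun h m t + c * h ^ (t + 1) + Jfun h c m t) := by
  intro t
  induction t with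
  | zero =>
    refine le0Q_trans (le0Q_of_eqv ?_) (le0Q_trans hc (le0Q_of_eqv ?_)) <;>
      · simp only [Pfun, Jfun]
        ring
  | succ t ih =>
    have s1 := le0Q_mul ih ((m : Q))
    have s2 := le0Q_mul hc (h ^ (t + 1))
    have s3 := le0Q_add_both s1 s2
    refine le0Q_trans (le0Q_of_eqv ?_) (le0Q_trans s3 (le0Q_of_eqv ?_)) <;>
      · simp only [Pfun, Jfun]
        ring

lemma omQ_one : omQ (1 : Q) = 1 := by
  have h := omQ_nat 1
  rwa [Nat.cast_one] at h

lemma omQ_Pfun_ge (h : Q) (m : ℕ) : ∀ t, m ^ t ≤ omQ (Pfun h m t) := by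
  intro t
  induction t with
  | zero => simp [Pfun, omQ_one]
  | succ t ih =>
    have e1 : omQ (Pfun h m (t + 1)) = m * omQ (Pfun h m t) + omQ (h ^ (t + 1)) := by
      rw [show Pfun h m (t + 1) = (m : Q) * Pfun h m t + h ^ (t + 1) from rfl]
      rw [omQ_add, omQ_nat_mul]
    rw [e1, pow_succ]
    calc m ^ t * m = m * m ^ t := by ring
      _ ≤ m * omQ (Pfun h m t) := Nat.mul_le_mul_left m ih
      _ ≤ m * omQ (Pfun h m t) + omQ (h ^ (t + 1)) := Nat.le_add_right _ _

lemma extension_sound (G : SimpleGraph V) (k m : ℕ) (hk : 1 ≤ k)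
    (hm : theta G ^ k < (m : ℝ)) :
    IsGood (extR baseR ((qk G) ^ k) ((m : ℕ) : Q)) := by
  obtain ⟨hbase, htrans, hadd, hmul⟩ := extR_good_except baseR_good ((qk G) ^ k) ((m : ℕ) : Q)
  refine ⟨hbase, htrans, hadd, hmul, ?_⟩
  rintro p q ⟨c, hcrel⟩
  by_contra hpq
  push_neg at hpq
  have hc : le0Q ((p : Q) + c * ((m : ℕ) : Q)) ((q : Q) + c * ((qk G) ^ k)) := hcrel
  set h : Q := (qk G) ^ k with hh_def
  obtain ⟨C, hC⟩ := omQ_mul_le c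
  have hθ1 : (1 : ℝ) ≤ theta G := one_le_theta G
  have hρpos : (0 : ℝ) < theta G ^ k := by positivity
  have key : ∀ t : ℕ, ((m : ℝ)) ^ t ≤ (C : ℝ) * (theta G ^ k) ^ (t + 1) := by
    intro t
    have h1 := omQ_mono (rel_iter hc t)
    have hcast : ((m : ℕ) : Q) ^ (t + 1) = ((m ^ (t + 1) : ℕ) : Q) := by push_cast; ring
    have eL : omQ ((p : Q) * Pfun h m t + c * ((m : ℕ) : Q) ^ (t + 1) + Jfun h c m t)
        = p * omQ (Pfun h m t) + m ^ (t + 1) * omQ c + omQ (Jfun h c m t) := by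
      rw [omQ_add, omQ_add, omQ_nat_mul, hcast, mul_comm c, omQ_nat_mul]
    have eR : omQ ((q : Q) * Pfun h m t + c * h ^ (t + 1) + Jfun h c m t)
        = q * omQ (Pfun h m t) + omQ (c * h ^ (t + 1)) + omQ (Jfun h c m t) := by
      rw [omQ_add, omQ_add, omQ_nat_mul]
    rw [eL, eR] at h1
    set A := omQ (Pfun h m t) with hA_def
    set X := m ^ (t + 1) * omQ c with hX_def
    set Y := omQ (c * h ^ (t + 1)) with hY_def
    set J := omQ (Jfun h c m t) with hJ_def
    have h2 : p * A + X ≤ q * A + Y := by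
      have := Nat.add_le_add_iff_right.mp h1
      exact this
    have h3 : q * A + A ≤ p * A := by
      have hqp : (q + 1) * A ≤ p * A := Nat.mul_le_mul_right A (by omega)
      calc q * A + A = (q + 1) * A := by ring
        _ ≤ p * A := hqp
    have h5 : q * A + (A + X) ≤ q * A + Y := by
      calc q * A + (A + X) = (q * A + A) + X := by ring
        _ ≤ p * A + X := Nat.add_le_add_right h3 X
        _ ≤ q * A + Y := h2
    have h4 : A ≤ Y := le_trans (Nat.le_add_right A X) (Nat.le_of_add_le_add_left h5)
    have hA : m ^ t ≤ A := omQ_Pfun_ge h m t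
    have hY : Y ≤ C * omQ (h ^ (t + 1)) := hC _
    have hhq : (omQ (h ^ (t + 1)) : ℝ) ≤ (theta G ^ k) ^ (t + 1) := by
      have e1 : h ^ (t + 1) = qk (disjPow G (k * (t + 1))) := by
        rw [qk_pow, hh_def, ← pow_mul]
      rw [e1, omQ_qk]
      have hkk : 1 ≤ k * (t + 1) := Nat.one_le_iff_ne_zero.mpr (by positivity)
      calc ((disjPow G (k * (t + 1))).cliqueNum : ℝ) ≤ theta G ^ (k * (t + 1)) :=
            om_le_theta_pow G hkk
        _ = (theta G ^ k) ^ (t + 1) := by rw [pow_mul]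
    calc ((m : ℝ)) ^ t ≤ (A : ℝ) := by exact_mod_cast hA
      _ ≤ (Y : ℝ) := by exact_mod_cast h4
      _ ≤ (C : ℝ) * (omQ (h ^ (t + 1)) : ℝ) := by exact_mod_cast hY
      _ ≤ (C : ℝ) * (theta G ^ k) ^ (t + 1) :=
          mul_le_mul_of_nonneg_left hhq (by positivity)
  set ρ : ℝ := theta G ^ k with hρ_def
  have hmρ : 1 < (m : ℝ) / ρ := (one_lt_div hρpos).mpr hm
  obtain ⟨t, ht⟩ := pow_unbounded_of_one_lt ((C : ℝ) * ρ) hmρ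
  have hcontr : (C : ℝ) * ρ ^ (t + 1) < (m : ℝ) ^ t := by
    calc (C : ℝ) * ρ ^ (t + 1) = ((C : ℝ) * ρ) * ρ ^ t := by ring
      _ < ((m : ℝ) / ρ) ^ t * ρ ^ t := mul_lt_mul_of_pos_right ht (by positivity)
      _ = (m : ℝ) ^ t := by
          rw [div_pow]
          field_simp
  linarith [key t]

lemma exists_small_invariant (G : SimpleGraph V) {ε : ℝ} (hε : 0 < ε) :
    ∃ η : SRInvariant, η.eta G ≤ theta G + ε := by
  have hθ1 := one_le_theta G
  have hθpos : (0 : ℝ) < theta G := by linarith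
  -- choose k with 1 ≤ k * ε
  obtain ⟨k0, hk0⟩ := exists_nat_gt (1 / ε)
  set k : ℕ := k0 + 1 with hk_def
  have hk1 : 1 ≤ k := by omega
  have hkε : 1 ≤ (k : ℝ) * ε := by
    have h1 : 1 / ε < (k : ℝ) := by
      calc (1 / ε) < (k0 : ℝ) := hk0
        _ ≤ (k : ℝ) := by exact_mod_cast Nat.le_succ k0
    calc (1 : ℝ) = (1 / ε) * ε := by field_simp
      _ ≤ (k : ℝ) * ε := mul_le_mul_of_nonneg_right h1.le hε.le
  set m : ℕ := Nat.floor (theta G ^ k) + 1 with hm_def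
  have hm1 : theta G ^ k < (m : ℝ) := by
    have := Nat.lt_floor_add_one (theta G ^ k)
    rw [hm_def]
    push_cast
    push_cast at this
    linarith
  have hm2 : (m : ℝ) ≤ (theta G + ε) ^ k := by
    have hfl : (m : ℝ) ≤ theta G ^ k + 1 := by
      have := Nat.floor_le (show (0 : ℝ) ≤ theta G ^ k by positivity)
      rw [hm_def]
      push_cast
      linarith
    obtain ⟨k', hk'⟩ : ∃ k', k = k' + 1 := ⟨k0, rfl⟩
    have hb : 1 + (k : ℝ) * (ε / theta G) ≤ (1 + ε / theta G) ^ k :=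
      one_add_mul_le_pow (le_trans (by norm_num : (-2 : ℝ) ≤ 0) (by positivity)) k
    have e1 : theta G + ε = theta G * (1 + ε / theta G) := by field_simp
    have h2 : theta G ^ k * (1 + (k : ℝ) * (ε / theta G)) ≤ (theta G + ε) ^ k := by
      rw [e1, mul_pow]
      exact mul_le_mul_of_nonneg_left hb (by positivity)
    have h3 : theta G ^ k + 1 ≤ theta G ^ k * (1 + (k : ℝ) * (ε / theta G)) := by
      have e2 : theta G ^ k * (1 + (k : ℝ) * (ε / theta G))
          = theta G ^ k + (k : ℝ) * ε * theta G ^ k' := by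
        rw [hk']
        field_simp
        ring
      rw [e2]
      have h4 : (1 : ℝ) ≤ theta G ^ k' := one_le_pow₀ hθ1
      nlinarith [hkε]
    linarith
  have hsound := extension_sound G k m hk1 hm1
  obtain ⟨M, hM, hsub, htot⟩ := exists_total_good hsound
  refine ⟨invOf M hM htot, ?_⟩
  have hmem : ((qk G) ^ k, ((m : ℕ) : Q)) ∈ M := hsub (extR_mem baseR_good _ _)
  have hb : etaM M (qk G) ^ k ≤ (m : ℝ) := by
    rw [← etaM_pow hM htot]
    have := etaM_mono hM hmem
    rwa [etaM_nat hM] at this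
  have h0 : 0 ≤ etaM M (qk G) := etaM_nonneg hM _
  have hle1 : etaM M (qk G) ≤ (m : ℝ) ^ ((1 : ℝ) / k) := by
    calc etaM M (qk G) = ((etaM M (qk G) ^ k : ℝ)) ^ ((1 : ℝ) / k) :=
          (pow_rpow_cancel h0 hk1).symm
      _ ≤ (m : ℝ) ^ ((1 : ℝ) / k) := Real.rpow_le_rpow (by positivity) hb (by positivity)
  have hle2 : ((m : ℝ)) ^ ((1 : ℝ) / k) ≤ theta G + ε := by
    calc (m : ℝ) ^ ((1 : ℝ) / k) ≤ (((theta G + ε) ^ k : ℝ)) ^ ((1 : ℝ) / k) :=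
          Real.rpow_le_rpow (by positivity) hm2 (by positivity)
      _ = theta G + ε := pow_rpow_cancel (by positivity) hk1
  exact le_trans (le_trans (le_of_eq rfl) hle1) hle2

end Main

end ZD
/-- Zuiddam's theorem: the complementary Shannon capacity
`Θ(Ḡ) = sup_{n ≥ 1} ω(G^{*n})^{1/n}` equals the infimum of `η(G)` over all
semiring-homomorphic graph invariants `η`. -/
theorem shannonCapacity_eq_inf_invariants {V : Type} [Fintype V] [Nonempty V]
    (G : SimpleGraph V) :
    sSup {x : ℝ | ∃ n : ℕ, 1 ≤ n ∧
        x = (SimpleGraph.cliqueNum (disjPow G n) : ℝ) ^ ((1 : ℝ) / n)}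
      = sInf {x : ℝ | ∃ η : SRInvariant, x = η.eta G} := by
  classical
  show sSup (ZD.thetaSet G) = sInf {x : ℝ | ∃ η : SRInvariant, x = η.eta G}
  set S2 := {x : ℝ | ∃ η : SRInvariant, x = η.eta G} with hS2def
  have hS2ne : S2.Nonempty := by
    obtain ⟨η, _⟩ := ZD.exists_small_invariant G one_pos
    exact ⟨η.eta G, η, rfl⟩
  have hS2bdd : BddBelow S2 := by
    refine ⟨1, ?_⟩
    rintro y ⟨η, rfl⟩
    exact ZD.one_le_eta η G
  apply le_antisymm
  · refine csSup_le (ZD.thetaSet_nonempty G) ?_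
    rintro x ⟨n, hn, rfl⟩
    refine le_csInf hS2ne ?_
    rintro y ⟨η, rfl⟩
    have h1 : ((disjPow G n).cliqueNum : ℝ) ≤ η.eta G ^ n := by
      have h2 := ZD.om_le_eta η (disjPow G n)
      rwa [ZD.eta_pow] at h2
    have hη1 : 1 ≤ η.eta G := ZD.one_le_eta η G
    calc ((disjPow G n).cliqueNum : ℝ) ^ ((1 : ℝ) / n)
        ≤ ((η.eta G ^ n : ℝ)) ^ ((1 : ℝ) / n) :=
          Real.rpow_le_rpow (by positivity) h1 (by positivity)
      _ = η.eta G := ZD.pow_rpow_cancel (by linarith) hn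
  · by_contra hcon
    push_neg at hcon
    have hθ : ZD.theta G = sSup (ZD.thetaSet G) := rfl
    set ε : ℝ := (sInf S2 - sSup (ZD.thetaSet G)) / 2 with hε_def
    have hεpos : 0 < ε := by
      rw [hε_def]
      linarith
    obtain ⟨η, hη⟩ := ZD.exists_small_invariant G hεpos
    have hmem : η.eta G ∈ S2 := ⟨η, rfl⟩
    have hle := csInf_le hS2bdd hmem
    rw [hθ] at hη
    have : sInf S2 ≤ sSup (ZD.thetaSet G) + ε := le_trans hle hη
    rw [hε_def] at this
    linarith
end

section
/- Let (F_n) be a semiring family of graphs and let G and H be finite simple graphs. Then the asymptotic F-number is subadditive under joins: η_F^asymp(G + H) ≤ η_F^asymp(G) + η_F^asymp(H). -/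
open SimpleGraph

universe u v

section Aux
open Finset

variable {γ : Type*} {δ : Type*}

lemma disjProd_adj {A : SimpleGraph γ} {B : SimpleGraph δ} {p q : γ × δ} :
    (disjProd A B).Adj p q ↔ A.Adj p.1 q.1 ∨ B.Adj p.2 q.2 := Iff.rfl

lemma disjPow_adj {K : SimpleGraph γ} {n : ℕ} {f g : Fin n → γ} :
    (disjPow K n).Adj f g ↔ ∃ i, K.Adj (f i) (g i) := Iff.rfl

lemma graphJoin_adj_inl_inl {A : SimpleGraph γ} {B : SimpleGraph δ} {a a' : γ} :
    (graphJoin A B).Adj (Sum.inl a) (Sum.inl a') ↔ A.Adj a a' := Iff.rfl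

lemma graphJoin_adj_inr_inr {A : SimpleGraph γ} {B : SimpleGraph δ} {b b' : δ} :
    (graphJoin A B).Adj (Sum.inr b) (Sum.inr b') ↔ B.Adj b b' := Iff.rfl

lemma graphJoin_adj_inl_inr {A : SimpleGraph γ} {B : SimpleGraph δ} {a : γ} {b : δ} :
    (graphJoin A B).Adj (Sum.inl a) (Sum.inr b) := trivial

lemma graphJoin_adj_inr_inl {A : SimpleGraph γ} {B : SimpleGraph δ} {a : γ} {b : δ} :
    (graphJoin A B).Adj (Sum.inr b) (Sum.inl a) := trivial

/-- `F m` contains an `m`-clique. -/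
lemma SemiringFamily.exists_clique (F : SemiringFamily.{u}) (m : ℕ) :
    ∃ f : Fin m → F.V m, ∀ i j : Fin m, i ≠ j → (F.F m).Adj (f i) (f j) := by
  induction m with
  | zero => exact ⟨Fin.elim0, fun i => i.elim0⟩
  | succ m ih =>
    obtain ⟨f, hf⟩ := ih
    obtain ⟨v⟩ := F.nonempty_one
    obtain ⟨φ⟩ := F.add_hom m 1
    refine ⟨fun i => if h : (i : ℕ) < m then φ (Sum.inl (f ⟨i, h⟩)) else φ (Sum.inr v), ?_⟩
    intro i j hij
    by_cases hi : (i : ℕ) < m <;> by_cases hj : (j : ℕ) < m <;> simp only [hi, hj, dif_pos, dif_neg, not_false_iff]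
    · refine φ.map_rel (graphJoin_adj_inl_inl.mpr (hf _ _ ?_))
      simp only [ne_eq, Fin.mk.injEq]
      exact fun h => hij (Fin.ext h)
    · exact φ.map_rel graphJoin_adj_inl_inr
    · exact φ.map_rel graphJoin_adj_inr_inl
    · exfalso
      have := i.isLt; have := j.isLt
      exact hij (Fin.ext (by omega))

lemma etaF_set_nonempty (F : SemiringFamily.{u}) (K : SimpleGraph γ) [Fintype γ] :
    {n : ℕ | Nonempty (K →g F.F n)}.Nonempty := by
  obtain ⟨f, hf⟩ := F.exists_clique (Fintype.card γ)
  refine ⟨Fintype.card γ, ⟨⟨fun v => f (Fintype.equivFin γ v), ?_⟩⟩⟩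
  intro a b hab
  exact hf _ _ (fun h => K.ne_of_adj hab (by simpa using (Fintype.equivFin γ).injective (by exact_mod_cast h)))

lemma hom_etaF (F : SemiringFamily.{u}) (K : SimpleGraph γ) [Fintype γ] :
    Nonempty (K →g F.F (etaF F K)) :=
  Nat.sInf_mem (etaF_set_nonempty F K)

lemma etaF_le (F : SemiringFamily.{u}) {K : SimpleGraph γ} {n : ℕ}
    (h : Nonempty (K →g F.F n)) : etaF F K ≤ n :=
  Nat.sInf_le h

lemma etaF_le_of_hom (F : SemiringFamily.{u}) {K : SimpleGraph γ} {K' : SimpleGraph δ}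
    [Fintype δ] (φ : K →g K') : etaF F K ≤ etaF F K' := by
  obtain ⟨ψ⟩ := hom_etaF F K'
  exact etaF_le F ⟨ψ.comp φ⟩

lemma one_le_etaF (F : SemiringFamily.{u}) (K : SimpleGraph γ) [Fintype γ] [Nonempty γ] :
    1 ≤ etaF F K := by
  rw [Nat.one_le_iff_ne_zero]
  intro h
  obtain ⟨φ⟩ := hom_etaF F K
  rw [h] at φ
  exact F.isEmpty_zero.false (φ (Classical.arbitrary γ))

end Aux
section Aux2
open Finset

variable {γ : Type*} {δ : Type*} {γ' : Type*} {δ' : Type*}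

def prodHom {A : SimpleGraph γ} {B : SimpleGraph δ} {A' : SimpleGraph γ'} {B' : SimpleGraph δ'}
    (φ : A →g A') (ψ : B →g B') : disjProd A B →g disjProd A' B' where
  toFun p := (φ p.1, ψ p.2)
  map_rel' h := h.imp (fun h' => φ.map_rel h') (fun h' => ψ.map_rel h')

def joinHom {A : SimpleGraph γ} {B : SimpleGraph δ} {A' : SimpleGraph γ'} {B' : SimpleGraph δ'}
    (φ : A →g A') (ψ : B →g B') : graphJoin A B →g graphJoin A' B' where
  toFun := Sum.map φ ψ
  map_rel' := by
    rintro (a | b) (a' | b') h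
    · exact φ.map_rel h
    · exact graphJoin_adj_inl_inr
    · exact graphJoin_adj_inr_inl
    · exact ψ.map_rel h

lemma etaF_disjProd_le (F : SemiringFamily.{u}) [Fintype γ] [Fintype δ]
    (A : SimpleGraph γ) (B : SimpleGraph δ) :
    etaF F (disjProd A B) ≤ etaF F A * etaF F B := by
  obtain ⟨φ⟩ := hom_etaF F A
  obtain ⟨ψ⟩ := hom_etaF F B
  obtain ⟨μ⟩ := F.mul_hom (etaF F A) (etaF F B)
  exact etaF_le F ⟨μ.comp (prodHom φ ψ)⟩

lemma etaF_join_le (F : SemiringFamily.{u}) [Fintype γ] [Fintype δ]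
    (A : SimpleGraph γ) (B : SimpleGraph δ) :
    etaF F (graphJoin A B) ≤ etaF F A + etaF F B := by
  obtain ⟨φ⟩ := hom_etaF F A
  obtain ⟨ψ⟩ := hom_etaF F B
  obtain ⟨μ⟩ := F.add_hom (etaF F A) (etaF F B)
  exact etaF_le F ⟨μ.comp (joinHom φ ψ)⟩

def powSplit (K : SimpleGraph γ) (c d : ℕ) :
    disjPow K (c + d) →g disjProd (disjPow K c) (disjPow K d) where
  toFun f := (fun i => f (Fin.castAdd d i), fun i => f (Fin.natAdd c i))
  map_rel' := by
    rintro f g ⟨i, hi⟩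
    rcases h : finSumFinEquiv.symm i with a | b
    · have hi' : Fin.castAdd d a = i := by
        rw [← finSumFinEquiv_apply_left, ← h, Equiv.apply_symm_apply]
      exact Or.inl ⟨a, by show K.Adj (f (Fin.castAdd d a)) (g (Fin.castAdd d a)); rw [hi']; exact hi⟩
    · have hi' : Fin.natAdd c b = i := by
        rw [← finSumFinEquiv_apply_right, ← h, Equiv.apply_symm_apply]
      exact Or.inr ⟨b, by show K.Adj (f (Fin.natAdd c b)) (g (Fin.natAdd c b)); rw [hi']; exact hi⟩

lemma etaF_disjPow_split (F : SemiringFamily.{u}) [Fintype γ] (K : SimpleGraph γ) (c d : ℕ) :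
    etaF F (disjPow K (c + d)) ≤ etaF F (disjPow K c) * etaF F (disjPow K d) :=
  le_trans (etaF_le_of_hom F (powSplit K c d)) (etaF_disjProd_le F _ _)

lemma etaF_disjPow_mul_add (F : SemiringFamily.{u}) [Fintype γ] (K : SimpleGraph γ)
    (n q r : ℕ) :
    etaF F (disjPow K (q * n + r)) ≤ etaF F (disjPow K n) ^ q * etaF F (disjPow K r) := by
  induction q with
  | zero => rw [Nat.zero_mul, Nat.zero_add, pow_zero, Nat.one_mul]
  | succ q ih =>
    have e : (q + 1) * n + r = n + (q * n + r) := by ring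
    calc etaF F (disjPow K ((q + 1) * n + r))
        ≤ etaF F (disjPow K n) * etaF F (disjPow K (q * n + r)) := by
          rw [e]; exact etaF_disjPow_split F K n (q * n + r)
      _ ≤ etaF F (disjPow K n) * (etaF F (disjPow K n) ^ q * etaF F (disjPow K r)) :=
          Nat.mul_le_mul_left _ ih
      _ = etaF F (disjPow K n) ^ (q + 1) * etaF F (disjPow K r) := by ring

end Aux2
section Aux3
open Finset

variable {α' : Type*} {β' : Type*}

/-- Auxiliary graph `(G^{*j} ⋆ H^{*k}) ⋆ (G+H)^{*N}`. -/
def Qgraph (G : SimpleGraph α') (H : SimpleGraph β') (j k N : ℕ) :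
    SimpleGraph (((Fin j → α') × (Fin k → β')) × (Fin N → α' ⊕ β')) :=
  disjProd (disjProd (disjPow G j) (disjPow H k)) (disjPow (graphJoin G H) N)

def stepHom (G : SimpleGraph α') (H : SimpleGraph β') (j k N : ℕ) :
    Qgraph G H j k (N + 1) →g graphJoin (Qgraph G H (j + 1) k N) (Qgraph G H j (k + 1) N) where
  toFun p :=
    match p.2 0 with
    | Sum.inl a => Sum.inl ((Fin.snoc p.1.1 a, p.1.2), fun i => p.2 i.succ)
    | Sum.inr b => Sum.inr ((p.1.1, Fin.snoc p.1.2 b), fun i => p.2 i.succ)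
  map_rel' := by
    rintro ⟨⟨u, v⟩, w⟩ ⟨⟨u', v'⟩, w'⟩ h
    rcases hw : w 0 with a | b <;> rcases hw' : w' 0 with a' | b' <;>
      simp only [hw, hw']
    · -- inl, inl
      show (Qgraph G H (j+1) k N).Adj _ _
      rcases h with (⟨i, hG⟩ | ⟨i, hH⟩) | ⟨i, hJ⟩
      · exact Or.inl (Or.inl ⟨i.castSucc, by simpa [Fin.snoc_castSucc] using hG⟩)
      · exact Or.inl (Or.inr ⟨i, hH⟩)
      · rcases i.eq_zero_or_eq_succ with rfl | ⟨i', rfl⟩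
        · simp only [hw, hw'] at hJ
          exact Or.inl (Or.inl ⟨Fin.last j, by
            simpa [Fin.snoc_last] using graphJoin_adj_inl_inl.mp hJ⟩)
        · exact Or.inr ⟨i', hJ⟩
    · exact graphJoin_adj_inl_inr
    · exact graphJoin_adj_inr_inl
    · -- inr, inr
      show (Qgraph G H j (k+1) N).Adj _ _
      rcases h with (⟨i, hG⟩ | ⟨i, hH⟩) | ⟨i, hJ⟩
      · exact Or.inl (Or.inl ⟨i, hG⟩)
      · exact Or.inl (Or.inr ⟨i.castSucc, by simpa [Fin.snoc_castSucc] using hH⟩)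
      · rcases i.eq_zero_or_eq_succ with rfl | ⟨i', rfl⟩
        · simp only [hw, hw'] at hJ
          exact Or.inl (Or.inr ⟨Fin.last k, by
            simpa [Fin.snoc_last] using graphJoin_adj_inr_inr.mp hJ⟩)
        · exact Or.inr ⟨i', hJ⟩

def baseHom (G : SimpleGraph α') (H : SimpleGraph β') (j k : ℕ) :
    Qgraph G H j k 0 →g disjProd (disjPow G j) (disjPow H k) where
  toFun := Prod.fst
  map_rel' := by
    rintro ⟨p, w⟩ ⟨q, w'⟩ (h | ⟨i, _⟩)
    · exact h
    · exact i.elim0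

def embedHom (G : SimpleGraph α') (H : SimpleGraph β') (N : ℕ) :
    disjPow (graphJoin G H) N →g Qgraph G H 0 0 N where
  toFun w := ((Fin.elim0, Fin.elim0), w)
  map_rel' h := Or.inr h

/-- Pascal-style sum identity in ℕ. -/
lemma pascal_sum (A B : ℕ → ℕ) (j k N : ℕ) :
    ∑ i ∈ range (N + 1), N.choose i * (A (j + 1 + i) * B (k + (N - i)))
      + ∑ i ∈ range (N + 1), N.choose i * (A (j + i) * B (k + 1 + (N - i)))
    = ∑ i ∈ range (N + 1 + 1), (N + 1).choose i * (A (j + i) * B (k + (N + 1 - i))) := by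
  have hA : ∑ i ∈ range (N + 1), N.choose i * (A (j + 1 + i) * B (k + (N - i)))
      = ∑ i ∈ range (N + 1), N.choose i * (A (j + (i + 1)) * B (k + (N - i))) := by
    refine Finset.sum_congr rfl fun i _ => ?_
    have : j + 1 + i = j + (i + 1) := by omega
    rw [this]
  have hB : ∑ i ∈ range (N + 1), N.choose i * (A (j + i) * B (k + 1 + (N - i)))
      = ∑ i ∈ range N, N.choose (i + 1) * (A (j + (i + 1)) * B (k + (N - i)))
        + A j * B (k + (N + 1)) := by
    rw [Finset.sum_range_succ']
    congr 1
    · refine Finset.sum_congr rfl fun i hi => ?_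
      have hi' : i < N := Finset.mem_range.mp hi
      have : k + 1 + (N - (i + 1)) = k + (N - i) := by omega
      rw [this]
    · have e : k + 1 + (N - 0) = k + (N + 1) := by omega
      rw [e, Nat.choose_zero_right, Nat.add_zero, one_mul]
  have hExt : ∑ i ∈ range N, N.choose (i + 1) * (A (j + (i + 1)) * B (k + (N - i)))
      = ∑ i ∈ range (N + 1), N.choose (i + 1) * (A (j + (i + 1)) * B (k + (N - i))) := by
    rw [Finset.sum_range_succ, Nat.choose_succ_self]
    simp
  have hR : ∑ i ∈ range (N + 1 + 1), (N + 1).choose i * (A (j + i) * B (k + (N + 1 - i)))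
      = ∑ i ∈ range (N + 1), (N.choose i + N.choose (i + 1))
          * (A (j + (i + 1)) * B (k + (N - i)))
        + A j * B (k + (N + 1)) := by
    rw [Finset.sum_range_succ']
    congr 1
    · refine Finset.sum_congr rfl fun i _ => ?_
      rw [Nat.choose_succ_succ, Nat.succ_sub_succ]
    · simp
  rw [hA, hB, hExt, hR]
  simp only [add_mul, Finset.sum_add_distrib]
  ring

end Aux3
section Aux4
open Finset

variable {α' : Type*} {β' : Type*}

lemma etaF_Q_le (F : SemiringFamily.{u}) [Fintype α'] [Fintype β']
    (G : SimpleGraph α') (H : SimpleGraph β') (N : ℕ) : ∀ j k : ℕ,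
    etaF F (Qgraph G H j k N) ≤ ∑ i ∈ range (N + 1),
      N.choose i * (etaF F (disjPow G (j + i)) * etaF F (disjPow H (k + (N - i)))) := by
  induction N with
  | zero =>
    intro j k
    have h := le_trans (etaF_le_of_hom F (baseHom G H j k)) (etaF_disjProd_le F (disjPow G j) (disjPow H k))
    simpa using h
  | succ N ih =>
    intro j k
    have h1 := etaF_le_of_hom F (stepHom G H j k N)
    have h2 := etaF_join_le F (Qgraph G H (j + 1) k N) (Qgraph G H j (k + 1) N)
    have hp := pascal_sum (fun i => etaF F (disjPow G i)) (fun i => etaF F (disjPow H i)) j k N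
    exact le_trans h1 (le_trans h2 (le_trans (Nat.add_le_add (ih (j + 1) k) (ih j (k + 1)))
      (le_of_eq hp)))

/-- When `α'` is empty, `(G+H)^{*N}` maps into `H^{*N}`. -/
def emptyLeftHom (G : SimpleGraph α') (H : SimpleGraph β') [IsEmpty α'] (N : ℕ) :
    disjPow (graphJoin G H) N →g disjPow H N where
  toFun w := fun i => Sum.elim (fun a => isEmptyElim a) id (w i)
  map_rel' := by
    rintro w w' ⟨i, hJ⟩
    refine ⟨i, ?_⟩
    rcases hw : w i with a | b
    · exact isEmptyElim a
    · rcases hw' : w' i with a' | b'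
      · exact isEmptyElim a'
      · simp only [hw, hw'] at hJ
        simp only [hw, hw', Sum.elim_inr, id]
        exact graphJoin_adj_inr_inr.mp hJ

def emptyRightHom (G : SimpleGraph α') (H : SimpleGraph β') [IsEmpty β'] (N : ℕ) :
    disjPow (graphJoin G H) N →g disjPow G N where
  toFun w := fun i => Sum.elim id (fun b => isEmptyElim b) (w i)
  map_rel' := by
    rintro w w' ⟨i, hJ⟩
    refine ⟨i, ?_⟩
    rcases hw : w i with a | b
    · rcases hw' : w' i with a' | b'
      · simp only [hw, hw'] at hJ
        simp only [hw, hw', Sum.elim_inl, id]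
        exact graphJoin_adj_inl_inl.mp hJ
      · exact isEmptyElim b'
    · exact isEmptyElim b

end Aux4
section Aux5
open Finset

variable {γ' : Type*}

lemma rpow_growth (F : SemiringFamily.{u}) [Fintype γ'] [Nonempty γ'] (G : SimpleGraph γ')
    (n : ℕ) (hn : 1 ≤ n) (i : ℕ) :
    (etaF F (disjPow G i) : ℝ) ≤
      ((∑ r ∈ range n, etaF F (disjPow G r) : ℕ) : ℝ) *
        ((etaF F (disjPow G n) : ℝ) ^ ((1 : ℝ) / n)) ^ i := by
  have h0 : etaF F (disjPow G i) ≤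
      etaF F (disjPow G n) ^ (i / n) * etaF F (disjPow G (i % n)) := by
    have h := etaF_disjPow_mul_add F G n (i / n) (i % n)
    have e : i / n * n + i % n = i := by
      rw [Nat.mul_comm]; exact Nat.div_add_mod i n
    rwa [e] at h
  have h1 : 1 ≤ etaF F (disjPow G n) := one_le_etaF F _
  have h1R : (1 : ℝ) ≤ (etaF F (disjPow G n) : ℝ) := by exact_mod_cast h1
  have hq : ((etaF F (disjPow G n) : ℝ)) ^ (i / n : ℕ) ≤
      ((etaF F (disjPow G n) : ℝ) ^ ((1 : ℝ) / n)) ^ i := by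
    rw [← Real.rpow_natCast ((etaF F (disjPow G n) : ℝ) ^ ((1 : ℝ) / n)) i,
      ← Real.rpow_natCast (etaF F (disjPow G n) : ℝ) (i / n),
      ← Real.rpow_mul (by positivity)]
    apply Real.rpow_le_rpow_of_exponent_le h1R
    calc ((i / n : ℕ) : ℝ) ≤ (i : ℝ) / (n : ℝ) := Nat.cast_div_le
      _ = 1 / n * i := by ring
  have hr : (etaF F (disjPow G (i % n)) : ℝ) ≤ ((∑ r ∈ range n, etaF F (disjPow G r) : ℕ) : ℝ) := by
    have h2 : etaF F (disjPow G (i % n)) ≤ ∑ r ∈ range n, etaF F (disjPow G r) :=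
      Finset.single_le_sum (f := fun r => etaF F (disjPow G r)) (fun r _ => Nat.zero_le _)
        (Finset.mem_range.mpr (Nat.mod_lt i (show 0 < n by omega)))
    exact_mod_cast h2
  calc (etaF F (disjPow G i) : ℝ)
      ≤ (etaF F (disjPow G n) : ℝ) ^ (i / n : ℕ) * (etaF F (disjPow G (i % n)) : ℝ) := by
        exact_mod_cast h0
    _ ≤ ((etaF F (disjPow G n) : ℝ) ^ ((1 : ℝ) / n)) ^ i *
          ((∑ r ∈ range n, etaF F (disjPow G r) : ℕ) : ℝ) :=
        mul_le_mul hq hr (by positivity) (by positivity)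
    _ = _ := by ring

lemma one_le_M (F : SemiringFamily.{u}) [Fintype γ'] [Nonempty γ'] (G : SimpleGraph γ')
    (n : ℕ) (hn : 1 ≤ n) :
    (1 : ℝ) ≤ ((∑ r ∈ range n, etaF F (disjPow G r) : ℕ) : ℝ) := by
  have h : 1 ≤ ∑ r ∈ range n, etaF F (disjPow G r) :=
    le_trans (one_le_etaF F (disjPow G 0))
      (Finset.single_le_sum (f := fun r => etaF F (disjPow G r)) (a := 0) (fun r _ => Nat.zero_le _) (Finset.mem_range.mpr (show 0 < n by omega)))
  exact_mod_cast h

lemma etaAsymp_set_nonempty (F : SemiringFamily.{u}) (G : SimpleGraph γ') :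
    {x : ℝ | ∃ n : ℕ, 1 ≤ n ∧ x = (etaF F (disjPow G n) : ℝ) ^ ((1 : ℝ) / n)}.Nonempty :=
  ⟨_, 1, le_refl 1, rfl⟩

lemma etaAsymp_set_bddBelow (F : SemiringFamily.{u}) (G : SimpleGraph γ') :
    BddBelow {x : ℝ | ∃ n : ℕ, 1 ≤ n ∧ x = (etaF F (disjPow G n) : ℝ) ^ ((1 : ℝ) / n)} := by
  refine ⟨0, ?_⟩
  rintro x ⟨n, -, rfl⟩
  exact Real.rpow_nonneg (Nat.cast_nonneg _) _

lemma etaAsymp_nonneg (F : SemiringFamily.{u}) (G : SimpleGraph γ') :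
    0 ≤ etaAsymp F G := by
  refine le_csInf (etaAsymp_set_nonempty F G) ?_
  rintro x ⟨n, -, rfl⟩
  exact Real.rpow_nonneg (Nat.cast_nonneg _) _

lemma etaAsymp_le_rpow (F : SemiringFamily.{u}) (G : SimpleGraph γ') (N : ℕ) (hN : 1 ≤ N) :
    etaAsymp F G ≤ (etaF F (disjPow G N) : ℝ) ^ ((1 : ℝ) / N) :=
  csInf_le (etaAsymp_set_bddBelow F G) ⟨N, hN, rfl⟩

end Aux5
section Aux6
open Finset Filter

variable {α' : Type*} {β' : Type*}

lemma main_bound (F : SemiringFamily.{u}) [Fintype α'] [Fintype β'] [Nonempty α'] [Nonempty β']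
    (G : SimpleGraph α') (H : SimpleGraph β') (n m : ℕ) (hn : 1 ≤ n) (hm : 1 ≤ m) (N : ℕ) :
    (etaF F (disjPow (graphJoin G H) N) : ℝ) ≤
      (((∑ r ∈ range n, etaF F (disjPow G r) : ℕ) : ℝ) *
        ((∑ r ∈ range m, etaF F (disjPow H r) : ℕ) : ℝ)) *
      ((etaF F (disjPow G n) : ℝ) ^ ((1 : ℝ) / n)
        + (etaF F (disjPow H m) : ℝ) ^ ((1 : ℝ) / m)) ^ N := by
  have h0 : etaF F (disjPow (graphJoin G H) N) ≤ etaF F (Qgraph G H 0 0 N) :=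
    etaF_le_of_hom F (embedHom G H N)
  have h1 := etaF_Q_le F G H N 0 0
  have h2 : etaF F (disjPow (graphJoin G H) N) ≤
      ∑ i ∈ range (N + 1), N.choose i * (etaF F (disjPow G i) * etaF F (disjPow H (N - i))) := by
    refine le_trans (le_trans h0 h1) (le_of_eq (Finset.sum_congr rfl fun i _ => ?_))
    rw [Nat.zero_add, Nat.zero_add]
  calc (etaF F (disjPow (graphJoin G H) N) : ℝ)
      ≤ ∑ i ∈ range (N + 1),
          (N.choose i : ℝ) * ((etaF F (disjPow G i) : ℝ) * (etaF F (disjPow H (N - i)) : ℝ)) := by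
        exact_mod_cast h2
    _ ≤ ∑ i ∈ range (N + 1), (N.choose i : ℝ) *
          ((((∑ r ∈ range n, etaF F (disjPow G r) : ℕ) : ℝ) *
              ((etaF F (disjPow G n) : ℝ) ^ ((1 : ℝ) / n)) ^ i) *
           (((∑ r ∈ range m, etaF F (disjPow H r) : ℕ) : ℝ) *
              ((etaF F (disjPow H m) : ℝ) ^ ((1 : ℝ) / m)) ^ (N - i))) := by
        refine Finset.sum_le_sum fun i _ => ?_
        refine mul_le_mul_of_nonneg_left ?_ (by positivity)
        exact mul_le_mul (rpow_growth F G n hn i) (rpow_growth F H m hm (N - i))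
          (by positivity) (by positivity)
    _ = (((∑ r ∈ range n, etaF F (disjPow G r) : ℕ) : ℝ) *
          ((∑ r ∈ range m, etaF F (disjPow H r) : ℕ) : ℝ)) *
        ∑ i ∈ range (N + 1),
          ((etaF F (disjPow G n) : ℝ) ^ ((1 : ℝ) / n)) ^ i *
            ((etaF F (disjPow H m) : ℝ) ^ ((1 : ℝ) / m)) ^ (N - i) * (N.choose i : ℝ) := by
        rw [Finset.mul_sum]
        exact Finset.sum_congr rfl fun i _ => by ring
    _ = _ := by rw [← add_pow]

end Aux6

/-- The asymptotic `F`-number is subadditive under joins. -/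
theorem etaAsymp_join_subadditive (F : SemiringFamily.{u}) {α : Type v} {β : Type w}
    [Fintype α] [Fintype β] (G : SimpleGraph α) (H : SimpleGraph β) :
    etaAsymp F (graphJoin G H) ≤ etaAsymp F G + etaAsymp F H := by
  classical
  by_cases hα : Nonempty α
  · by_cases hβ : Nonempty β
    · -- main case: both nonempty
      have key : ∀ x ∈ {x : ℝ | ∃ n : ℕ, 1 ≤ n ∧ x = (etaF F (disjPow G n) : ℝ) ^ ((1 : ℝ) / n)},
          ∀ y ∈ {x : ℝ | ∃ m : ℕ, 1 ≤ m ∧ x = (etaF F (disjPow H m) : ℝ) ^ ((1 : ℝ) / m)},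
          etaAsymp F (graphJoin G H) ≤ x + y := by
        rintro x ⟨n, hn, rfl⟩ y ⟨m, hm, rfl⟩
        set x := (etaF F (disjPow G n) : ℝ) ^ ((1 : ℝ) / n) with hx
        set y := (etaF F (disjPow H m) : ℝ) ^ ((1 : ℝ) / m) with hy
        set C : ℝ := ((∑ r ∈ Finset.range n, etaF F (disjPow G r) : ℕ) : ℝ) *
          ((∑ r ∈ Finset.range m, etaF F (disjPow H r) : ℕ) : ℝ) with hC
        have hMG := one_le_M F G n hn
        have hMH := one_le_M F H m hm
        have hC1 : (1 : ℝ) ≤ C := by rw [hC]; nlinarith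
        have hx0 : 0 ≤ x := Real.rpow_nonneg (Nat.cast_nonneg _) _
        have hy0 : 0 ≤ y := Real.rpow_nonneg (Nat.cast_nonneg _) _
        have hxy0 : 0 ≤ x + y := by linarith
        have hfin : ∀ N : ℕ, 1 ≤ N →
            etaAsymp F (graphJoin G H) ≤ C ^ ((1 : ℝ) / N) * (x + y) := by
          intro N hN
          have hb := main_bound F G H n m hn hm N
          rw [← hx, ← hy, ← hC] at hb
          have h2 := etaAsymp_le_rpow F (graphJoin G H) N hN
          have h3 : ((etaF F (disjPow (graphJoin G H) N) : ℕ) : ℝ) ^ ((1 : ℝ) / N)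
              ≤ (C * (x + y) ^ N) ^ ((1 : ℝ) / N) :=
            Real.rpow_le_rpow (Nat.cast_nonneg _) hb (by positivity)
          have h4 : (C * (x + y) ^ N) ^ ((1 : ℝ) / N) = C ^ ((1 : ℝ) / N) * (x + y) := by
            rw [Real.mul_rpow (by linarith) (by positivity),
              ← Real.rpow_natCast (x + y) N, ← Real.rpow_mul hxy0,
              mul_one_div, div_self (show (N : ℝ) ≠ 0 by positivity), Real.rpow_one]
          linarith
        have hlim : Filter.Tendsto (fun N : ℕ => C ^ ((1 : ℝ) / N) * (x + y))
            Filter.atTop (nhds (x + y)) := by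
          have h5 := tendsto_one_div_atTop_nhds_zero_nat (𝕜 := ℝ)
          have h6 : ContinuousAt (fun z : ℝ => C ^ z) 0 :=
            Real.continuousAt_const_rpow (by linarith)
          have h7 := h6.tendsto.comp h5
          rw [Real.rpow_zero] at h7
          have h8 := h7.mul_const (x + y)
          simpa using h8
        exact ge_of_tendsto hlim (Filter.eventually_atTop.mpr ⟨1, fun N hN => hfin N hN⟩)
      have hG_ne := etaAsymp_set_nonempty F G
      have hH_ne := etaAsymp_set_nonempty F H
      have h8 : ∀ x ∈ {x : ℝ | ∃ n : ℕ, 1 ≤ n ∧ x = (etaF F (disjPow G n) : ℝ) ^ ((1 : ℝ) / n)},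
          etaAsymp F (graphJoin G H) - x ≤ etaAsymp F H := by
        intro x hx
        have : etaAsymp F (graphJoin G H) - x ≤
            sInf {y : ℝ | ∃ m : ℕ, 1 ≤ m ∧ y = (etaF F (disjPow H m) : ℝ) ^ ((1 : ℝ) / m)} :=
          le_csInf hH_ne fun y hy => by have := key x hx y hy; linarith
        exact this
      have h9 : etaAsymp F (graphJoin G H) - etaAsymp F H ≤ etaAsymp F G := by
        have : etaAsymp F (graphJoin G H) - etaAsymp F H ≤
            sInf {x : ℝ | ∃ n : ℕ, 1 ≤ n ∧ x = (etaF F (disjPow G n) : ℝ) ^ ((1 : ℝ) / n)} :=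
          le_csInf hG_ne fun x hx => by have := h8 x hx; linarith
        exact this
      linarith
    · -- β empty
      haveI : IsEmpty β := not_nonempty_iff.mp hβ
      have h1 : etaAsymp F (graphJoin G H) ≤ etaAsymp F G := by
        have : etaAsymp F (graphJoin G H) ≤
            sInf {x : ℝ | ∃ n : ℕ, 1 ≤ n ∧ x = (etaF F (disjPow G n) : ℝ) ^ ((1 : ℝ) / n)} := by
          refine le_csInf (etaAsymp_set_nonempty F G) ?_
          rintro x ⟨N, hN, rfl⟩
          refine le_trans (etaAsymp_le_rpow F _ N hN) ?_
          refine Real.rpow_le_rpow (Nat.cast_nonneg _) ?_ (by positivity)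
          exact_mod_cast etaF_le_of_hom F (emptyRightHom G H N)
        exact this
      have h2 := etaAsymp_nonneg F H
      linarith
  · -- α empty
    haveI : IsEmpty α := not_nonempty_iff.mp hα
    have h1 : etaAsymp F (graphJoin G H) ≤ etaAsymp F H := by
      have : etaAsymp F (graphJoin G H) ≤
          sInf {x : ℝ | ∃ m : ℕ, 1 ≤ m ∧ x = (etaF F (disjPow H m) : ℝ) ^ ((1 : ℝ) / m)} := by
        refine le_csInf (etaAsymp_set_nonempty F H) ?_
        rintro x ⟨N, hN, rfl⟩
        refine le_trans (etaAsymp_le_rpow F _ N hN) ?_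
        refine Real.rpow_le_rpow (Nat.cast_nonneg _) ?_ (by positivity)
        exact_mod_cast etaF_le_of_hom F (emptyLeftHom G H N)
      exact this
    have h2 := etaAsymp_nonneg F G
    linarith
end

section
/- Let 𝔽 be a field and n ∈ ℕ. Then the graph F_n (defined below) contains a clique of size n but no clique of size n + 1; that is, its clique number equals n. (The n pairwise adjacent vertices can be taken to be the pairs (e_i, e_i) of standard basis vectors; conversely, in any clique {(x_1,y_1),…,(x_k,y_k)} the vectors x_1,…,x_k are linearly independent, forcing k ≤ n.) -/
open SimpleGraph

universe u

/-- The graph `F_n` associated to a field `𝔽`: vertices are pairs of vectors with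
dot product `1`, adjacent iff the two cross dot products both vanish. -/
def pairingGraph (𝔽 : Type u) [Field 𝔽] (n : ℕ) :
    SimpleGraph {p : (Fin n → 𝔽) × (Fin n → 𝔽) // ∑ i, p.1 i * p.2 i = 1} where
  Adj x y := (∑ i, x.val.1 i * y.val.2 i = 0) ∧ (∑ i, y.val.1 i * x.val.2 i = 0)
  symm := ⟨fun x y h => ⟨h.2, h.1⟩⟩
  loopless := ⟨fun x h => one_ne_zero (x.property.symm.trans h.1)⟩

/-- The graph `F_n` has clique number exactly `n`: it contains a clique of size `n`
but no clique of size `n + 1`. -/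
theorem pairingGraph_cliqueNum (𝔽 : Type u) [Field 𝔽] (n : ℕ) :
    (∃ s : Finset {p : (Fin n → 𝔽) × (Fin n → 𝔽) // ∑ i, p.1 i * p.2 i = 1},
        (pairingGraph 𝔽 n).IsNClique n s) ∧
      ∀ s : Finset {p : (Fin n → 𝔽) × (Fin n → 𝔽) // ∑ i, p.1 i * p.2 i = 1},
        ¬ (pairingGraph 𝔽 n).IsNClique (n + 1) s := by
  classical
  constructor
  · -- the clique of size n
    have hdot : ∀ i j : Fin n,
        ∑ k, Pi.single i (1 : 𝔽) k * Pi.single j (1 : 𝔽) k =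
          (if i = j then (1:𝔽) else 0) := by
      intro i j
      rcases eq_or_ne i j with rfl | h
      · simp [Pi.single_apply]
      · simp [Pi.single_apply, h, Ne.symm h, mul_ite, ite_and]
    have hv : ∀ i : Fin n, ∑ k, Pi.single i (1 : 𝔽) k * Pi.single i (1 : 𝔽) k = (1:𝔽) := by
      intro i; simp [hdot]
    set v : Fin n → {p : (Fin n → 𝔽) × (Fin n → 𝔽) // ∑ i, p.1 i * p.2 i = 1} :=
      fun i => ⟨(Pi.single i 1, Pi.single i 1), hv i⟩ with hvdef
    have hinj : Function.Injective v := by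
      intro i j hij
      by_contra hne
      have := congrArg (fun p => p.val.1 j) hij
      simp [hvdef, Pi.single_apply, hne] at this
    refine ⟨Finset.univ.map ⟨v, hinj⟩, ?_, by simp⟩
    intro a ha b hb hab
    simp only [Finset.coe_map, Set.mem_image, Finset.coe_univ, Set.image_univ,
      Set.mem_range, Function.Embedding.coeFn_mk] at ha hb
    obtain ⟨i, rfl⟩ := ha
    obtain ⟨j, rfl⟩ := hb
    have hij : i ≠ j := fun h => hab (by rw [h])
    constructor <;> simp [hvdef, hdot, hij, hij.symm]
  · -- no clique of size n+1
    intro s hs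
    have hli : LinearIndependent 𝔽 (fun a : s => (a : {p : (Fin n → 𝔽) × (Fin n → 𝔽) //
        ∑ i, p.1 i * p.2 i = 1}).val.1) := by
      rw [linearIndependent_iff]
      intro l hl
      ext w
      have hw := congrArg (fun f : Fin n → 𝔽 => ∑ k, f k * (w : {p : (Fin n → 𝔽) × (Fin n → 𝔽) //
        ∑ i, p.1 i * p.2 i = 1}).val.2 k) hl
      simp only [Finsupp.linearCombination_apply, Finsupp.sum, Finset.sum_apply,
        Pi.smul_apply, smul_eq_mul, Pi.zero_apply, zero_mul, Finset.sum_eq_zero,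
        Finset.sum_mul] at hw
      rw [Finset.sum_comm] at hw
      have key : ∀ v ∈ l.support,
          ∑ k, l v * (v : {p : (Fin n → 𝔽) × (Fin n → 𝔽) // ∑ i, p.1 i * p.2 i = 1}).val.1 k *
            (w : {p : (Fin n → 𝔽) × (Fin n → 𝔽) // ∑ i, p.1 i * p.2 i = 1}).val.2 k =
          if v = w then l v else 0 := by
        intro v _
        rcases eq_or_ne v w with rfl | hvw
        · simp only [if_pos rfl]
          calc ∑ k, l v * (v : {p : (Fin n → 𝔽) × (Fin n → 𝔽) //
                ∑ i, p.1 i * p.2 i = 1}).val.1 k *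
                (v : {p : (Fin n → 𝔽) × (Fin n → 𝔽) // ∑ i, p.1 i * p.2 i = 1}).val.2 k
              = l v * ∑ k, (v : {p : (Fin n → 𝔽) × (Fin n → 𝔽) //
                ∑ i, p.1 i * p.2 i = 1}).val.1 k *
                (v : {p : (Fin n → 𝔽) × (Fin n → 𝔽) // ∑ i, p.1 i * p.2 i = 1}).val.2 k := by
                rw [Finset.mul_sum]; exact Finset.sum_congr rfl fun k _ => mul_assoc _ _ _
            _ = l v := by
                rw [(v : {p : (Fin n → 𝔽) × (Fin n → 𝔽) //
                  ∑ i, p.1 i * p.2 i = 1}).property, mul_one]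
        · have hadj : (pairingGraph 𝔽 n).Adj v w := by
            apply hs.isClique v.property w.property
            exact fun h => hvw (Subtype.ext h)
          rw [if_neg hvw]
          have := hadj.1
          calc ∑ k, l v * _ * _ = l v * ∑ k,
              (v : {p : (Fin n → 𝔽) × (Fin n → 𝔽) // ∑ i, p.1 i * p.2 i = 1}).val.1 k *
              (w : {p : (Fin n → 𝔽) × (Fin n → 𝔽) // ∑ i, p.1 i * p.2 i = 1}).val.2 k := by
                rw [Finset.mul_sum]; exact Finset.sum_congr rfl fun k _ => mul_assoc _ _ _
            _ = 0 := by rw [this, mul_zero]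
      rw [Finset.sum_congr rfl key, Finset.sum_ite_eq' l.support w (fun v => l v)] at hw
      by_cases hws : w ∈ l.support
      · simpa [hws] using hw
      · simpa using Finsupp.notMem_support_iff.mp hws
    have hcard := hli.fintype_card_le_finrank
    simp only [Fintype.card_coe, Module.finrank_fintype_fun_eq_card, Fintype.card_fin] at hcard
    have := hs.card_eq
    omega
end
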